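/- arXiv:math/0503224 — 13 statements merged into one kernel-verified Lean document; each statement's English description precedes it below -/
import Mathlib

section
/- For all N×N complex matrices P, Q, R, the product • is associative: (P • Q) • R = P • (Q • R); the triple product has entries ((P • Q) • R)_{il} = Σ_{j,k : ⟨i ≤ j ≤ k ≤ l⟩} P_{ij} Q_{jk} R_{kl}; and the identity matrix is a two-sided unit: I • P = P • I = P. Thus (M_N(ℂ), +, •) is an associative unital ℂ-algebra. -/
open Matrix BigOperators Finset

/-- `cyc3 i j k` : the sequence `(i,j,k)` of indices is cyclically ordered `⟨i ≤ j ≤ k⟩`,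
i.e. some cyclic rotation of it is weakly increasing, with all entries required to be
equal when the first and last entries coincide. -/
def cyc3 {N : ℕ} (i j k : Fin N) : Prop :=
  if i = k then j = i
  else (i ≤ j ∧ j ≤ k) ∨ (j ≤ k ∧ k ≤ i) ∨ (k ≤ i ∧ i ≤ j)

instance cyc3.dec {N : ℕ} (i j k : Fin N) : Decidable (cyc3 i j k) := by
  unfold cyc3; infer_instance

/-- The degenerate product `•` on `N × N` complex matrices:
`(P • Q)_{ik} = ∑_{j : ⟨i ≤ j ≤ k⟩} P_{ij} Q_{jk}`. -/
noncomputable def cprod {N : ℕ} (P Q : Matrix (Fin N) (Fin N) ℂ) :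
    Matrix (Fin N) (Fin N) ℂ :=
  Matrix.of fun i k => ∑ j ∈ Finset.univ.filter (fun j => cyc3 i j k), P i j * Q j k

/-- `cyc4 i j k l` : the sequence `(i,j,k,l)` is cyclically ordered `⟨i ≤ j ≤ k ≤ l⟩`. -/
def cyc4 {N : ℕ} (i j k l : Fin N) : Prop :=
  if i = l then j = i ∧ k = i
  else (i ≤ j ∧ j ≤ k ∧ k ≤ l) ∨ (j ≤ k ∧ k ≤ l ∧ l ≤ i) ∨
       (k ≤ l ∧ l ≤ i ∧ i ≤ j) ∨ (l ≤ i ∧ i ≤ j ∧ j ≤ k)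

instance cyc4.dec {N : ℕ} (i j k l : Fin N) : Decidable (cyc4 i j k l) := by
  unfold cyc4; infer_instance

lemma key1 {N : ℕ} (i j k l : Fin N) : (cyc3 i k l ∧ cyc3 i j k) ↔ cyc4 i j k l := by
  unfold cyc3 cyc4
  simp only [Fin.ext_iff, Fin.le_def]
  split_ifs <;> omega

lemma key2 {N : ℕ} (i j k l : Fin N) : (cyc3 i j l ∧ cyc3 j k l) ↔ cyc4 i j k l := by
  unfold cyc3 cyc4
  simp only [Fin.ext_iff, Fin.le_def]
  split_ifs <;> omega

lemma cyc3_left {N : ℕ} (i k : Fin N) : cyc3 i i k := by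
  unfold cyc3; simp only [Fin.ext_iff, Fin.le_def]; split_ifs <;> omega

lemma cyc3_right {N : ℕ} (i k : Fin N) : cyc3 i k k := by
  unfold cyc3; simp only [Fin.ext_iff, Fin.le_def]; split_ifs <;> omega

lemma triple_left {N : ℕ} (P Q R : Matrix (Fin N) (Fin N) ℂ) (i l : Fin N) :
    cprod (cprod P Q) R i l =
      ∑ j : Fin N, ∑ k : Fin N, if cyc4 i j k l then P i j * Q j k * R k l else 0 := by
  simp only [cprod, Matrix.of_apply, Finset.sum_filter]
  have h : ∀ k : Fin N,
      (if cyc3 i k l then (∑ j, if cyc3 i j k then P i j * Q j k else 0) * R k l else 0)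
      = ∑ j, if cyc3 i k l ∧ cyc3 i j k then P i j * Q j k * R k l else 0 := by
    intro k
    split_ifs with hk
    · rw [Finset.sum_mul]
      exact Finset.sum_congr rfl fun j _ => by simp [hk, ite_mul, mul_assoc]
    · exact (Finset.sum_eq_zero fun j _ => by simp [hk]).symm
  simp only [h, key1]
  exact Finset.sum_comm

lemma triple_right {N : ℕ} (P Q R : Matrix (Fin N) (Fin N) ℂ) (i l : Fin N) :
    cprod P (cprod Q R) i l =
      ∑ j : Fin N, ∑ k : Fin N, if cyc4 i j k l then P i j * Q j k * R k l else 0 := by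
  simp only [cprod, Matrix.of_apply, Finset.sum_filter]
  have h : ∀ j : Fin N,
      (if cyc3 i j l then P i j * (∑ k, if cyc3 j k l then Q j k * R k l else 0) else 0)
      = ∑ k, if cyc3 i j l ∧ cyc3 j k l then P i j * Q j k * R k l else 0 := by
    intro j
    split_ifs with hj
    · rw [Finset.mul_sum]
      exact Finset.sum_congr rfl fun k _ => by simp [hj, mul_ite, mul_assoc]
    · exact (Finset.sum_eq_zero fun k _ => by simp [hj]).symm
  simp only [h, key2]

/-- The product `•` is associative, its triple product has entries
`((P • Q) • R)_{il} = ∑_{j,k : ⟨i ≤ j ≤ k ≤ l⟩} P_{ij} Q_{jk} R_{kl}`, the identity matrix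
is a two-sided unit, and together with addition and scalar multiplication this makes
`(M_N(ℂ), +, •)` an associative unital `ℂ`-algebra. -/
theorem brauer_cprod_assoc_unital (N : ℕ) (hN : 0 < N)
    (P Q R : Matrix (Fin N) (Fin N) ℂ) :
    cprod (cprod P Q) R = cprod P (cprod Q R) ∧
    (∀ i l : Fin N, cprod (cprod P Q) R i l =
      ∑ j : Fin N, ∑ k : Fin N, if cyc4 i j k l then P i j * Q j k * R k l else 0) ∧
    cprod 1 P = P ∧ cprod P 1 = P ∧
    cprod (P + Q) R = cprod P R + cprod Q R ∧
    cprod R (P + Q) = cprod R P + cprod R Q ∧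
    (∀ c : ℂ, cprod (c • P) Q = c • cprod P Q ∧ cprod P (c • Q) = c • cprod P Q) := by
  refine ⟨?_, triple_left P Q R, ?_, ?_, ?_, ?_, ?_⟩
  · ext i l
    rw [triple_left, triple_right]
  · ext i k
    simp only [cprod, Matrix.of_apply]
    rw [Finset.sum_eq_single i]
    · simp [Matrix.one_apply]
    · intro j hj hji
      simp [Matrix.one_apply, Ne.symm hji]
    · intro h
      simp [cyc3_left] at h
  · ext i k
    simp only [cprod, Matrix.of_apply]
    rw [Finset.sum_eq_single k]
    · simp [Matrix.one_apply]
    · intro j hj hjk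
      simp [Matrix.one_apply, hjk]
    · intro h
      simp [cyc3_right] at h
  · ext i k
    simp [cprod, add_mul, Finset.sum_add_distrib]
  · ext i k
    simp [cprod, mul_add, Finset.sum_add_distrib]
  · intro c
    constructor <;> ext i k <;>
      simp [cprod, Finset.mul_sum, mul_assoc, mul_left_comm]
end

section
/- A matrix P ∈ M_N(ℂ) possesses a two-sided inverse for the product • (i.e., there exists Q with P • Q = Q • P = I, where I is the identity matrix) if and only if all diagonal entries P_{ii}, i = 1,…,N, are nonzero. In particular the set U = {M ∈ M_N(ℂ) : M_{ii} = 1 for all i} is a group under •. -/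
open Matrix BigOperators Finset

lemma fin_sub_val {n : ℕ} (a b : Fin (n+1)) :
    (a - b).val = if b.val ≤ a.val then a.val - b.val else a.val + (n+1) - b.val := by
  rw [Fin.sub_def]
  have ha := a.isLt; have hb := b.isLt
  split_ifs with h
  · have : (n + 1 - b.val + a.val) = (a.val - b.val) + (n+1) := by omega
    simp only [this, Nat.add_mod_right]
    exact Nat.mod_eq_of_lt (by omega)
  · have h2 : n + 1 - b.val + a.val = a.val + (n+1) - b.val := by omega
    rw [h2]
    exact Nat.mod_eq_of_lt (by omega)

lemma cyc3_iff_nat {n : ℕ} (i j k : Fin (n+1)) :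
    cyc3 i j k ↔ (if i.val = k.val then j.val = i.val
      else (i.val ≤ j.val ∧ j.val ≤ k.val) ∨ (j.val ≤ k.val ∧ k.val ≤ i.val) ∨
        (k.val ≤ i.val ∧ i.val ≤ j.val)) := by
  unfold cyc3
  simp only [Fin.ext_iff, Fin.le_def]

lemma cyc3_iff_sub {n : ℕ} (i j k : Fin (n+1)) :
    cyc3 i j k ↔ (k - j) ≤ (k - i) := by
  rw [cyc3_iff_nat, Fin.le_def, fin_sub_val, fin_sub_val]
  have ha := i.isLt; have hb := j.isLt; have hc := k.isLt
  split_ifs <;> omega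

lemma cyc3_assoc_cond {n : ℕ} (i j l m : Fin (n+1)) :
    (cyc3 i j l ∧ cyc3 i l m) ↔ (cyc3 i j m ∧ cyc3 j l m) := by
  rw [cyc3_iff_nat i j l, cyc3_iff_nat i l m, cyc3_iff_nat i j m, cyc3_iff_nat j l m]
  have h1 := i.isLt; have h2 := j.isLt; have h3 := l.isLt; have h4 := m.isLt
  split_ifs <;> omega

lemma cyc3_diag {N : ℕ} (i j : Fin N) : cyc3 i j i ↔ j = i := by
  unfold cyc3; simp

lemma cprod_apply {N : ℕ} (P Q : Matrix (Fin N) (Fin N) ℂ) (i k : Fin N) :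
    cprod P Q i k = ∑ j : Fin N, if cyc3 i j k then P i j * Q j k else 0 := by
  rw [cprod, Matrix.of_apply, Finset.sum_filter]

lemma cprod_diag {N : ℕ} (P Q : Matrix (Fin N) (Fin N) ℂ) (i : Fin N) :
    cprod P Q i i = P i i * Q i i := by
  rw [cprod_apply]
  rw [Finset.sum_eq_single i]
  · simp [cyc3_left]
  · intro j _ hj
    simp [cyc3_diag, hj]
  · simp

lemma cprod_one {N : ℕ} (P : Matrix (Fin N) (Fin N) ℂ) : cprod P 1 = P := by
  ext i k
  rw [cprod_apply, Finset.sum_eq_single k]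
  · simp [cyc3_right]
  · intro j _ hj
    simp [Matrix.one_apply, hj]
  · simp

lemma one_cprod {N : ℕ} (P : Matrix (Fin N) (Fin N) ℂ) : cprod 1 P = P := by
  ext i k
  rw [cprod_apply, Finset.sum_eq_single i]
  · simp [cyc3_left]
  · intro j _ hj
    simp [Matrix.one_apply_ne (Ne.symm hj)]
  · simp

lemma cprod_assoc {n : ℕ} (P Q R : Matrix (Fin (n+1)) (Fin (n+1)) ℂ) :
    cprod (cprod P Q) R = cprod P (cprod Q R) := by
  ext i m
  rw [cprod_apply, cprod_apply]
  have L : ∀ l, (if cyc3 i l m then cprod P Q i l * R l m else 0)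
      = ∑ j : Fin (n+1), if cyc3 i j l ∧ cyc3 i l m then P i j * Q j l * R l m else 0 := by
    intro l
    split_ifs with h
    · rw [cprod_apply, Finset.sum_mul]
      refine Finset.sum_congr rfl fun j _ => ?_
      by_cases hj : cyc3 i j l <;> simp [hj, h]
    · simp [h]
  have Rr : ∀ j, (if cyc3 i j m then P i j * cprod Q R j m else 0)
      = ∑ l : Fin (n+1), if cyc3 i j m ∧ cyc3 j l m then P i j * (Q j l * R l m) else 0 := by
    intro j
    split_ifs with h
    · rw [cprod_apply, Finset.mul_sum]
      refine Finset.sum_congr rfl fun l _ => ?_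
      by_cases hl : cyc3 j l m <;> simp [hl, h]
    · simp [h]
  simp only [L, Rr]
  rw [Finset.sum_comm]
  refine Finset.sum_congr rfl fun j _ => Finset.sum_congr rfl fun l _ => ?_
  rw [← mul_assoc]
  by_cases h1 : cyc3 i j l ∧ cyc3 i l m
  · rw [if_pos h1, if_pos ((cyc3_assoc_cond i j l m).mp h1)]
  · rw [if_neg h1, if_neg (fun h2 => h1 ((cyc3_assoc_cond i j l m).mpr h2))]

lemma exists_right_inv {n : ℕ} (P : Matrix (Fin (n+1)) (Fin (n+1)) ℂ)
    (hP : ∀ i, P i i ≠ 0) : ∃ Q, cprod P Q = 1 := by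
  set A : Fin (n+1) → Matrix (Fin (n+1)) (Fin (n+1)) ℂ :=
    fun k => Matrix.of fun d e => if e ≤ d then P (k - d) (k - e) else 0 with hA
  have hdet : ∀ k, IsUnit (A k).det := by
    intro k
    have htri : (A k).BlockTriangular OrderDual.toDual := by
      intro d e h
      have : ¬ (e ≤ d) := not_le.mpr h
      simp [hA, this]
    rw [Matrix.det_of_lowerTriangular _ htri]
    rw [isUnit_iff_ne_zero]
    refine Finset.prod_ne_zero_iff.mpr fun d _ => ?_
    simp only [hA, Matrix.of_apply, if_pos (le_refl d)]
    exact hP (k - d)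
  set e0 : Fin (n+1) → ℂ := fun d => if d = 0 then 1 else 0 with he0
  refine ⟨Matrix.of fun j k => ((A k)⁻¹.mulVec e0) (k - j), ?_⟩
  ext i k
  rw [cprod_apply]
  have step : ∀ j : Fin (n+1), (if cyc3 i j k then
      P i j * (Matrix.of fun j k => ((A k)⁻¹.mulVec e0) (k - j)) j k else 0)
      = A k (k - i) (k - j) * ((A k)⁻¹.mulVec e0) (k - j) := by
    intro j
    have : A k (k - i) (k - j) = if (k - j) ≤ (k - i) then P i j else 0 := by
      simp only [hA, Matrix.of_apply, sub_sub_cancel]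
    rw [this]
    by_cases h : cyc3 i j k
    · rw [if_pos h, if_pos ((cyc3_iff_sub i j k).mp h)]
      simp
    · rw [if_neg h, if_neg (fun h2 => h ((cyc3_iff_sub i j k).mpr h2)), zero_mul]
  simp only [step]
  have reidx : ∑ x : Fin (n+1), A k (k - i) (k - x) * ((A k)⁻¹.mulVec e0) (k - x)
      = ∑ e : Fin (n+1), A k (k - i) e * ((A k)⁻¹.mulVec e0) e :=
    Fintype.sum_equiv (Equiv.subLeft k) _ _ (fun x => rfl)
  have hmv : ∑ e : Fin (n+1), A k (k - i) e * ((A k)⁻¹.mulVec e0) e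
      = ((A k) * (A k)⁻¹).mulVec e0 (k - i) := by
    rw [← Matrix.mulVec_mulVec]
    simp [Matrix.mulVec, dotProduct]
  rw [reidx, hmv, Matrix.mul_nonsing_inv _ (hdet k), Matrix.one_mulVec]
  simp only [he0, Matrix.one_apply]
  by_cases h : i = k
  · simp [h]
  · rw [if_neg h, if_neg (fun h2 : k - i = 0 => h (sub_eq_zero.mp h2).symm)]

lemma exists_two_sided {n : ℕ} (P : Matrix (Fin (n+1)) (Fin (n+1)) ℂ)
    (hP : ∀ i, P i i ≠ 0) : ∃ Q, cprod P Q = 1 ∧ cprod Q P = 1 := by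
  obtain ⟨Q, hPQ⟩ := exists_right_inv P hP
  have hQd : ∀ i, Q i i ≠ 0 := by
    intro i
    have h1 : P i i * Q i i = 1 := by
      have := congrFun (congrFun hPQ i) i
      rwa [cprod_diag, Matrix.one_apply_eq] at this
    exact right_ne_zero_of_mul_eq_one h1
  obtain ⟨R, hQR⟩ := exists_right_inv Q hQd
  have hRP : R = P := by
    calc R = cprod 1 R := (one_cprod R).symm
    _ = cprod (cprod P Q) R := by rw [hPQ]
    _ = cprod P (cprod Q R) := cprod_assoc P Q R
    _ = cprod P 1 := by rw [hQR]
    _ = P := cprod_one P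
  exact ⟨Q, hPQ, hRP ▸ hQR⟩

/-- A matrix `P` has a two-sided inverse for the product `•` if and only if all of its
diagonal entries are nonzero.  In particular the set
`U = {M : M_{ii} = 1 for all i}` is a group under `•` (it is closed under `•` and under
taking `•`-inverses; associativity and the unit are established separately). -/
theorem brauer_cprod_invertible_iff_diag_nonzero (N : ℕ) (hN : 0 < N) :
    (∀ P : Matrix (Fin N) (Fin N) ℂ,
      (∃ Q : Matrix (Fin N) (Fin N) ℂ, cprod P Q = 1 ∧ cprod Q P = 1) ↔
        (∀ i : Fin N, P i i ≠ 0)) ∧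
    (∀ P Q : Matrix (Fin N) (Fin N) ℂ, (∀ i, P i i = 1) → (∀ i, Q i i = 1) →
      (∀ i, cprod P Q i i = 1)) ∧
    (∀ P : Matrix (Fin N) (Fin N) ℂ, (∀ i, P i i = 1) →
      ∃ Q : Matrix (Fin N) (Fin N) ℂ, (∀ i, Q i i = 1) ∧
        cprod P Q = 1 ∧ cprod Q P = 1) := by
  obtain ⟨n, rfl⟩ : ∃ n, N = n + 1 := ⟨N - 1, by omega⟩
  refine ⟨fun P => ⟨?_, ?_⟩, ?_, ?_⟩
  · rintro ⟨Q, h1, _⟩ i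
    have h := congrFun (congrFun h1 i) i
    rw [cprod_diag, Matrix.one_apply_eq] at h
    exact left_ne_zero_of_mul_eq_one h
  · exact fun hP => exists_two_sided P hP
  · intro P Q hP hQ i
    rw [cprod_diag, hP i, hQ i, one_mul]
  · intro P hP
    obtain ⟨Q, h1, h2⟩ := exists_two_sided P (fun i => by rw [hP i]; exact one_ne_zero)
    refine ⟨Q, fun i => ?_, h1, h2⟩
    have h := congrFun (congrFun h1 i) i
    rwa [cprod_diag, Matrix.one_apply_eq, hP i, one_mul] at h
end

section
/- For all P, Q ∈ M_N(ℂ) and all indices i, k ∈ {1,…,N}: if i ≤ k then (P • Q)_{ik} = (P_≤ Q_≤)_{ik}, and if i > k then (P • Q)_{ik} = (P_≤ Q)_{ik} + (P Q_≤)_{ik}, where juxtaposition denotes the ordinary matrix product. (This expresses the isomorphism of (M_N(ℂ), •) with the semidirect product of the algebra of upper triangular matrices with the quotient bimodule M_N(ℂ)/R_N(ℂ).) -/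
open Matrix BigOperators Finset

/-- `upperTri M` is the weak upper triangle `M_≤` of `M`:
`(M_≤)_{ij} = M_{ij}` if `i ≤ j`, and `0` if `i > j`. -/
noncomputable def upperTri {N : ℕ} (M : Matrix (Fin N) (Fin N) ℂ) :
    Matrix (Fin N) (Fin N) ℂ :=
  Matrix.of fun i j => if i ≤ j then M i j else 0

lemma cyc3_iff {N : ℕ} (i j k : Fin N) :
    cyc3 i j k ↔ (if i = k then j = i
      else (i ≤ j ∧ j ≤ k) ∨ (j ≤ k ∧ k ≤ i) ∨ (k ≤ i ∧ i ≤ j)) := Iff.rfl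

/-- For `i ≤ k` one has `(P • Q)_{ik} = (P_≤ Q_≤)_{ik}`, and for `i > k` one has
`(P • Q)_{ik} = (P_≤ Q)_{ik} + (P Q_≤)_{ik}` (ordinary matrix products on the right);
this is the semidirect product model of `(M_N(ℂ), •)`. -/
theorem brauer_cprod_semidirect (N : ℕ) (hN : 0 < N)
    (P Q : Matrix (Fin N) (Fin N) ℂ) (i k : Fin N) :
    (i ≤ k → cprod P Q i k = (upperTri P * upperTri Q) i k) ∧
    (k < i → cprod P Q i k = (upperTri P * Q) i k + (P * upperTri Q) i k) := by
  constructor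
  · intro hik
    simp only [cprod, upperTri, Matrix.mul_apply, Matrix.of_apply, Finset.sum_filter]
    apply Finset.sum_congr rfl
    intro j _
    by_cases hc : cyc3 i j k
    · rw [if_pos hc]
      have hc' := (cyc3_iff i j k).mp hc
      rcases eq_or_lt_of_le hik with h | h
      · subst h
        rw [if_pos rfl] at hc'
        subst hc'
        simp
      · rw [if_neg h.ne] at hc'
        have h1 : i ≤ j := by
          rcases hc' with ⟨h1, _⟩ | ⟨_, h2⟩ | ⟨_, h2⟩
          · exact h1
          · exact absurd h2 (not_le.mpr h)
          · exact h2
        have h2 : j ≤ k := by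
          rcases hc' with ⟨_, h2⟩ | ⟨h2, _⟩ | ⟨h2, _⟩
          · exact h2
          · exact h2
          · exact absurd h2 (not_le.mpr h)
        rw [if_pos h1, if_pos h2]
    · rw [if_neg hc]
      have hc' := (cyc3_iff i j k).not.mp hc
      rcases eq_or_lt_of_le hik with h | h
      · subst h
        rw [if_pos rfl] at hc'
        rcases lt_or_gt_of_ne hc' with h' | h'
        · rw [if_neg (not_le.mpr h'), zero_mul]
        · rw [if_neg (not_le.mpr h'), mul_zero]
      · rw [if_neg h.ne] at hc'
        push_neg at hc'
        by_cases h1 : i ≤ j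
        · by_cases h2 : j ≤ k
          · exact absurd ((hc'.1 h1).trans_le h2) (lt_irrefl k)
          · rw [if_neg h2, mul_zero]
        · rw [if_neg h1, zero_mul]
  · intro hki
    simp only [cprod, upperTri, Matrix.mul_apply, Matrix.of_apply, Finset.sum_filter]
    rw [← Finset.sum_add_distrib]
    apply Finset.sum_congr rfl
    intro j _
    by_cases hc : cyc3 i j k
    · rw [if_pos hc]
      have hc' := (cyc3_iff i j k).mp hc
      rw [if_neg hki.ne'] at hc'
      rcases hc' with ⟨h1, h2⟩ | ⟨h2, _⟩ | ⟨_, h1⟩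
      · exact absurd ((h1.trans h2).trans_lt hki) (lt_irrefl i)
      · rw [if_neg (not_le.mpr (h2.trans_lt hki)), if_pos h2, zero_mul, zero_add]
      · rw [if_pos h1, if_neg (not_le.mpr (hki.trans_le h1)), mul_zero, add_zero]
    · rw [if_neg hc]
      have hc' := (cyc3_iff i j k).not.mp hc
      rw [if_neg hki.ne'] at hc'
      push_neg at hc'
      have h1 : ¬ i ≤ j := fun h => absurd (hc'.2.2 hki.le) (not_lt.mpr h)
      have h2 : ¬ j ≤ k := fun h => absurd (hc'.2.1 h) (not_lt.mpr hki.le)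
      rw [if_neg h1, if_neg h2, zero_mul, mul_zero, add_zero]
end

section
/- For s ∈ ℂ define (s·M)_{ij} = s^{(j−i) mod N} M_{ij}, with the exponent (j−i) mod N taken in {0,1,…,N−1}, and for s ≠ 0 define M ×_s Q := s^{−1}·((s·M)(s·Q)), where the inner product is the ordinary matrix product. Then for all M, Q ∈ M_N(ℂ), all s ≠ 0, and all indices i,k: (M ×_s Q)_{ik} = (M • Q)_{ik} + s^N Σ_{j : not ⟨i ≤ j ≤ k⟩} M_{ij} Q_{jk}. In particular, for each entry (i,k), (M ×_s Q)_{ik} tends to (M • Q)_{ik} as s → 0 through nonzero values: lim_{s→0} M ×_s Q = M • Q. -/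
open Matrix BigOperators Finset

open Topology Filter

/-- The rescaling `(s·M)_{ij} = s^{(j−i) mod N} M_{ij}`, exponent taken in `{0,…,N−1}`. -/
noncomputable def sdot (N : ℕ) (s : ℂ) (M : Matrix (Fin N) (Fin N) ℂ) :
    Matrix (Fin N) (Fin N) ℂ :=
  Matrix.of fun i j => s ^ ((N + j.val - i.val) % N) * M i j

lemma mod_sub_aux (N x y : ℕ) (hx : x < N) (hy : y < N) :
    (N + y - x) % N = if x ≤ y then y - x else N + y - x := by
  split_ifs with h
  · rw [show N + y - x = N + (y - x) by omega, Nat.add_mod_left,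
      Nat.mod_eq_of_lt (by omega)]
  · exact Nat.mod_eq_of_lt (by omega)

lemma key_exp {N : ℕ} (i j k : Fin N) :
    (N + j.val - i.val) % N + (N + k.val - j.val) % N
      = (N + k.val - i.val) % N + (if cyc3 i j k then 0 else N) := by
  have hi := i.isLt; have hj := j.isLt; have hk := k.isLt
  rw [mod_sub_aux N i.val j.val hi hj, mod_sub_aux N j.val k.val hj hk,
    mod_sub_aux N i.val k.val hi hk]
  by_cases h : cyc3 i j k <;> simp only [h, if_true, if_false] <;>
    unfold cyc3 at h <;>
    simp only [Fin.ext_iff, Fin.le_def, ite_prop_iff_or, not_or, not_and, not_le,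
      not_forall, not_exists, Decidable.not_not] at h <;>
    split_ifs <;> omega

/-- For `s ≠ 0`, the conjugated product `M ×_s Q = s⁻¹·((s·M)(s·Q))` satisfies
`(M ×_s Q)_{ik} = (M • Q)_{ik} + s^N ∑_{j : ¬⟨i ≤ j ≤ k⟩} M_{ij} Q_{jk}`;
in particular each entry of `M ×_s Q` tends to the corresponding entry of `M • Q`
as `s → 0` through nonzero values. -/
theorem brauer_cprod_degeneration (N : ℕ) (hN : 0 < N)
    (M Q : Matrix (Fin N) (Fin N) ℂ) :
    (∀ s : ℂ, s ≠ 0 → ∀ i k : Fin N,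
      sdot N s⁻¹ (sdot N s M * sdot N s Q) i k =
        cprod M Q i k +
          s ^ N * ∑ j ∈ Finset.univ.filter (fun j => ¬ cyc3 i j k), M i j * Q j k) ∧
    (∀ i k : Fin N,
      Tendsto (fun s : ℂ => sdot N s⁻¹ (sdot N s M * sdot N s Q) i k)
        (𝓝[≠] (0 : ℂ)) (𝓝 (cprod M Q i k))) := by
  have main : ∀ s : ℂ, s ≠ 0 → ∀ i k : Fin N,
      sdot N s⁻¹ (sdot N s M * sdot N s Q) i k =
        cprod M Q i k +
          s ^ N * ∑ j ∈ Finset.univ.filter (fun j => ¬ cyc3 i j k), M i j * Q j k := by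
    intro s hs i k
    simp only [sdot, cprod, Matrix.of_apply, Matrix.mul_apply]
    rw [Finset.mul_sum, Finset.mul_sum, Finset.sum_filter, Finset.sum_filter,
      ← Finset.sum_add_distrib]
    apply Finset.sum_congr rfl
    intro j _
    have hab := key_exp i j k
    have hrw : s ^ ((N + j.val - i.val) % N) * M i j *
        (s ^ ((N + k.val - j.val) % N) * Q j k)
        = s ^ ((N + j.val - i.val) % N + (N + k.val - j.val) % N) * (M i j * Q j k) := by
      rw [pow_add]; ring
    rw [hrw, hab, pow_add, inv_pow, mul_assoc (s ^ ((N + k.val - i.val) % N)),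
      inv_mul_cancel_left₀ (pow_ne_zero _ hs)]
    by_cases h : cyc3 i j k <;> simp [h] <;> ring
  refine ⟨main, fun i k => ?_⟩
  set C := ∑ j ∈ Finset.univ.filter (fun j => ¬ cyc3 i j k), M i j * Q j k with hC
  have h2 : Tendsto (fun s : ℂ => cprod M Q i k + s ^ N * C) (𝓝 0)
      (𝓝 (cprod M Q i k)) := by
    have hcont : Continuous fun s : ℂ => cprod M Q i k + s ^ N * C := by continuity
    simpa [zero_pow hN.ne'] using hcont.tendsto 0
  refine (h2.mono_left nhdsWithin_le_nhds).congr' ?_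
  filter_upwards [self_mem_nhdsWithin] with s hs
  exact (main s hs i k).symm
end

section
/- For any ω = (ω_1,…,ω_N) ∈ ℂ^N, define the rescaled matrix ω·M by (ω·M)_{ik} = (Π_{j : ⟨i ≤ j ≤ k⟩, j ≠ k} ω_j) M_{ik} (an empty product is 1, so diagonal entries are unchanged). Then for all P, Q ∈ M_N(ℂ): ω·(P • Q) = (ω·P) • (ω·Q). (This is the extra torus action on (M_N(ℂ), •) beyond diagonal conjugation and rescaling.) -/
open Matrix BigOperators Finset

/-- The torus rescaling: `(ω·M)_{ik} = (∏_{j : ⟨i ≤ j ≤ k⟩, j ≠ k} ω_j) M_{ik}`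
(an empty product is `1`, so diagonal entries are unchanged). -/
noncomputable def wdot {N : ℕ} (ω : Fin N → ℂ) (M : Matrix (Fin N) (Fin N) ℂ) :
    Matrix (Fin N) (Fin N) ℂ :=
  Matrix.of fun i k =>
    (∏ j ∈ Finset.univ.filter (fun j => cyc3 i j k ∧ j ≠ k), ω j) * M i k

lemma cyc_split {N : ℕ} (i j k l : Fin N) (h : cyc3 i j k) :
    (cyc3 i l k ∧ l ≠ k) ↔ (cyc3 i l j ∧ l ≠ j) ∨ (cyc3 j l k ∧ l ≠ k) := by
  simp only [cyc3, Fin.ext_iff, Fin.le_def, ne_eq] at *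
  split_ifs at * <;> omega

lemma cyc_disj {N : ℕ} (i j k l : Fin N) (h : cyc3 i j k) :
    ¬((cyc3 i l j ∧ l ≠ j) ∧ (cyc3 j l k ∧ l ≠ k)) := by
  simp only [cyc3, Fin.ext_iff, Fin.le_def, ne_eq] at *
  split_ifs at * <;> omega

lemma prod_split {N : ℕ} (i j k : Fin N) (h : cyc3 i j k) (ω : Fin N → ℂ) :
    (∏ l ∈ Finset.univ.filter (fun l => cyc3 i l k ∧ l ≠ k), ω l) =
    (∏ l ∈ Finset.univ.filter (fun l => cyc3 i l j ∧ l ≠ j), ω l) *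
    (∏ l ∈ Finset.univ.filter (fun l => cyc3 j l k ∧ l ≠ k), ω l) := by
  rw [← Finset.prod_union]
  · apply Finset.prod_congr _ (fun _ _ => rfl)
    rw [← Finset.filter_or]
    apply Finset.filter_congr
    intro l _
    simpa using cyc_split i j k l h
  · rw [Finset.disjoint_filter]
    intro l _ h1 h2
    exact cyc_disj i j k l h ⟨h1, h2⟩

/-- The extra torus action on `(M_N(ℂ), •)`: for every `ω ∈ ℂ^N`,
`ω·(P • Q) = (ω·P) • (ω·Q)`. -/
theorem brauer_extra_torus_action (N : ℕ) (hN : 0 < N) (ω : Fin N → ℂ)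
    (P Q : Matrix (Fin N) (Fin N) ℂ) :
    wdot ω (cprod P Q) = cprod (wdot ω P) (wdot ω Q) := by
  ext i k
  simp only [wdot, cprod, Matrix.of_apply, Finset.mul_sum]
  apply Finset.sum_congr rfl
  intro j hj
  rw [Finset.mem_filter] at hj
  rw [prod_split i j k hj.2 ω]
  ring
end

section
/- Let N ≥ 2, let M ∈ M_N(ℂ) have zero diagonal (M_{jj} = 0 for all j), let λ ∈ ℂ, and let i ∈ {1,…,N} (indices mod N, so i+1 means 1 when i = N). Then (M + λ e^{i+1,i}) • (M + λ e^{i+1,i}) = M • M. In particular M ∈ M_N(ℂ) with zero diagonal satisfies M • M = 0 if and only if M + λ e^{i+1,i} does. -/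
open Matrix BigOperators Finset

lemma succ_val {N : ℕ} [NeZero N] (hN : 2 ≤ N) (i : Fin N) :
    (i+1).val = i.val + 1 ∨ ((i+1).val = 0 ∧ i.val = N - 1) := by
  have hi := i.isLt
  have hbase : (i+1).val = (i.val + 1 % N) % N := by rw [Fin.add_def, Fin.val_one']
  have h1 : 1 % N = 1 := Nat.mod_eq_of_lt (by omega)
  rw [h1] at hbase
  rcases Nat.lt_or_ge (i.val + 1) N with h | h
  · left; rw [hbase, Nat.mod_eq_of_lt h]
  · right
    have hEq : i.val + 1 = N := by omega
    constructor
    · rw [hbase, hEq, Nat.mod_self]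
    · omega

lemma succ_ne {N : ℕ} [NeZero N] (hN : 2 ≤ N) (i : Fin N) : i + 1 ≠ i := by
  intro h
  have := congrArg Fin.val h
  rcases succ_val hN i with hv | ⟨hv, hl⟩ <;> omega

lemma key1_s6 {N : ℕ} [NeZero N] (hN : 2 ≤ N) (i k : Fin N) (h : cyc3 (i+1) i k) : k = i := by
  have hi := i.isLt
  have hk := k.isLt
  unfold cyc3 at h
  rcases eq_or_ne (i+1) k with he | hne
  · rw [if_pos he] at h
    exact absurd h.symm (succ_ne hN i)
  · rw [if_neg hne] at h
    have hne' : (i+1).val ≠ k.val := fun hh => hne (Fin.ext hh)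
    rcases succ_val hN i with hv | ⟨hv, hl⟩ <;>
    · rcases h with ⟨h1, h2⟩ | ⟨h1, h2⟩ | ⟨h1, h2⟩ <;>
        simp only [Fin.le_def] at h1 h2 <;>
        (apply Fin.ext; omega)

lemma key2_s6 {N : ℕ} [NeZero N] (hN : 2 ≤ N) (i a : Fin N) (h : cyc3 a (i+1) i) : a = i+1 := by
  have hi := i.isLt
  have ha := a.isLt
  unfold cyc3 at h
  rcases eq_or_ne a i with he | hne
  · rw [if_pos he] at h
    exact absurd (h.trans he) (succ_ne hN i)
  · rw [if_neg hne] at h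
    have hne' : a.val ≠ i.val := fun hh => hne (Fin.ext hh)
    rcases succ_val hN i with hv | ⟨hv, hl⟩ <;>
    · rcases h with ⟨h1, h2⟩ | ⟨h1, h2⟩ | ⟨h1, h2⟩ <;>
        simp only [Fin.le_def] at h1 h2 <;>
        (apply Fin.ext; omega)

/-- Adding any multiple of the matrix unit `e^{i+1,i}` (indices mod `N`) to a
zero-diagonal matrix `M` does not change `M • M`; in particular `M • M = 0` if and
only if `(M + λ e^{i+1,i}) • (M + λ e^{i+1,i}) = 0`. -/
theorem brauer_free_entry (N : ℕ) [NeZero N] (hN : 2 ≤ N)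
    (M : Matrix (Fin N) (Fin N) ℂ)
    (hdiag : ∀ j, M j j = 0) (lam : ℂ) (i : Fin N) :
    cprod (M + lam • Matrix.single (i + 1) i (1 : ℂ))
        (M + lam • Matrix.single (i + 1) i (1 : ℂ)) = cprod M M ∧
    (cprod M M = 0 ↔
      cprod (M + lam • Matrix.single (i + 1) i (1 : ℂ))
        (M + lam • Matrix.single (i + 1) i (1 : ℂ)) = 0) := by
  have hii : i + 1 ≠ i := succ_ne hN i
  have hE : ∀ a b : Fin N, (lam • Matrix.single (i+1) i (1:ℂ)) a b
      = if a = i+1 ∧ b = i then lam else 0 := by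
    intro a b
    simp only [Matrix.smul_apply, Matrix.single, Matrix.of_apply]
    by_cases h : a = i+1 ∧ b = i
    · rw [if_pos h, if_pos ⟨h.1.symm, h.2.symm⟩, smul_eq_mul, mul_one]
    · rw [if_neg h, if_neg (fun hh => h ⟨hh.1.symm, hh.2.symm⟩), smul_zero]
  have main : cprod (M + lam • Matrix.single (i + 1) i (1 : ℂ))
      (M + lam • Matrix.single (i + 1) i (1 : ℂ)) = cprod M M := by
    ext a k
    simp only [cprod, Matrix.of_apply]
    apply Finset.sum_congr rfl
    intro j hj
    have hcyc : cyc3 a j k := (Finset.mem_filter.mp hj).2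
    simp only [Matrix.add_apply, hE]
    by_cases h1 : a = i+1 ∧ j = i
    · have hk : k = i := by
        apply key1_s6 hN i k
        rw [h1.1, h1.2] at hcyc
        exact hcyc
      rw [h1.1, h1.2, hk, if_pos ⟨rfl, rfl⟩, if_neg (fun hh => hii hh.1.symm),
        add_zero, hdiag, mul_zero, mul_zero]
    · rw [if_neg h1, add_zero]
      by_cases h2 : j = i+1 ∧ k = i
      · have ha : a = i+1 := by
          apply key2_s6 hN i a
          rw [h2.1, h2.2] at hcyc
          exact hcyc
        rw [h2.1, h2.2, ha, hdiag, zero_mul, zero_mul]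
      · rw [if_neg h2, add_zero]
  exact ⟨main, by rw [main]⟩
end

section
/- Let N ≥ 2, let i ∈ {1,…,N} (indices mod N), and let M ∈ M_N(ℂ) have zero diagonal and M_{i+1,i} = 0. Then the •-commutator of e^{i,i+1} with M equals the ordinary commutator: e^{i,i+1} • M − M • e^{i,i+1} = e^{i,i+1} M − M e^{i,i+1}, where juxtaposition denotes the ordinary matrix product. -/
open Matrix BigOperators Finset

lemma val_add_one_aux {N : ℕ} [NeZero N] (hN : 2 ≤ N) (i : Fin N) :
    ((i + 1 : Fin N)).val = if i.val + 1 = N then 0 else i.val + 1 := by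
  have h2 : ((i + 1 : Fin N)).val = (i.val + 1) % N := by
    rw [Fin.add_def]
    simp [Fin.val_one', Nat.mod_eq_of_lt hN]
  rw [h2]
  have hi := i.isLt
  split_ifs with h
  · rw [h, Nat.mod_self]
  · exact Nat.mod_eq_of_lt (by omega)

lemma ne_add_one_aux {N : ℕ} [NeZero N] (hN : 2 ≤ N) (i : Fin N) : i ≠ i + 1 := by
  intro h
  have h1 := val_add_one_aux hN i
  rw [← h] at h1
  have hi := i.isLt
  split_ifs at h1 <;> omega

lemma cycA {N : ℕ} [NeZero N] (hN : 2 ≤ N) (i k : Fin N) (hk : k ≠ i) :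
    cyc3 i (i + 1) k := by
  unfold cyc3
  rw [if_neg (fun h => hk h.symm)]
  have h1 := val_add_one_aux hN i
  have hi := i.isLt
  have hk' := k.isLt
  have hik : i.val ≠ k.val := fun h => hk (Fin.ext h.symm)
  simp only [Fin.le_def]
  split_ifs at h1 <;> omega

lemma cycB {N : ℕ} [NeZero N] (hN : 2 ≤ N) (i a : Fin N) (ha : a ≠ i + 1) :
    cyc3 a i (i + 1) := by
  unfold cyc3
  rw [if_neg ha]
  have h1 := val_add_one_aux hN i
  have hi := i.isLt
  have ha' := a.isLt
  have hai : a.val ≠ (i + 1 : Fin N).val := fun h => ha (Fin.ext h)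
  simp only [Fin.le_def]
  split_ifs at h1 <;> omega

/-- If `M` has zero diagonal and `M_{i+1,i} = 0` (indices mod `N`), then the
`•`-commutator of the matrix unit `e^{i,i+1}` with `M` equals the ordinary
commutator. -/
theorem brauer_commutators_agree (N : ℕ) [NeZero N] (hN : 2 ≤ N) (i : Fin N)
    (M : Matrix (Fin N) (Fin N) ℂ)
    (hdiag : ∀ j, M j j = 0) (h0 : M (i + 1) i = 0) :
    cprod (Matrix.single i (i + 1) (1 : ℂ)) M -
        cprod M (Matrix.single i (i + 1) (1 : ℂ)) =
      Matrix.single i (i + 1) (1 : ℂ) * M -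
        M * Matrix.single i (i + 1) (1 : ℂ) := by
  have hii1 : i ≠ i + 1 := ne_add_one_aux hN i
  ext a k
  have hz1 : ∀ j : Fin N, j ≠ i + 1 →
      Matrix.single i (i + 1) (1 : ℂ) a j = 0 := by
    intro j hj
    simp only [Matrix.single, Matrix.of_apply]
    exact if_neg (fun h => hj h.2.symm)
  have hz2 : ∀ j : Fin N, j ≠ i →
      Matrix.single i (i + 1) (1 : ℂ) j k = 0 := by
    intro j hj
    simp only [Matrix.single, Matrix.of_apply]
    exact if_neg (fun h => hj h.1.symm)
  have L1 : cprod (Matrix.single i (i + 1) (1 : ℂ)) M a k =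
      if i = a ∧ cyc3 a (i + 1) k then M (i + 1) k else 0 := by
    rw [cprod, Matrix.of_apply, Finset.sum_filter]
    rw [Finset.sum_congr rfl (fun j _ => show
        (if cyc3 a j k then Matrix.single i (i + 1) (1 : ℂ) a j * M j k else 0) =
        (if j = i + 1 then (if i = a ∧ cyc3 a (i + 1) k then M (i + 1) k else 0) else 0)
        from ?_), Finset.sum_ite_eq' Finset.univ (i + 1)]
    · simp
    · by_cases hj : j = i + 1
      · rw [hj, if_pos rfl]
        by_cases hia : i = a <;> by_cases hc : cyc3 a (i + 1) k <;>
          simp [Matrix.single, hia, hc]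
      · rw [hz1 j hj, if_neg hj]
        simp
  have L2 : cprod M (Matrix.single i (i + 1) (1 : ℂ)) a k =
      if i + 1 = k ∧ cyc3 a i k then M a i else 0 := by
    rw [cprod, Matrix.of_apply, Finset.sum_filter]
    rw [Finset.sum_congr rfl (fun j _ => show
        (if cyc3 a j k then M a j * Matrix.single i (i + 1) (1 : ℂ) j k else 0) =
        (if j = i then (if i + 1 = k ∧ cyc3 a i k then M a i else 0) else 0)
        from ?_), Finset.sum_ite_eq' Finset.univ i]
    · simp
    · by_cases hj : j = i
      · rw [hj, if_pos rfl]
        by_cases hik : i + 1 = k <;> by_cases hc : cyc3 a i k <;>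
          simp [Matrix.single, hik, hc]
      · rw [hz2 j hj, if_neg hj]
        simp
  have R1 : (Matrix.single i (i + 1) (1 : ℂ) * M) a k =
      if i = a then M (i + 1) k else 0 := by
    rw [Matrix.mul_apply]
    rw [Finset.sum_congr rfl (fun j _ => show
        Matrix.single i (i + 1) (1 : ℂ) a j * M j k =
        (if j = i + 1 then (if i = a then M (i + 1) k else 0) else 0) from ?_),
      Finset.sum_ite_eq' Finset.univ (i + 1)]
    · simp
    · by_cases hj : j = i + 1
      · rw [hj, if_pos rfl]
        by_cases hia : i = a <;> simp [Matrix.single, hia]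
      · rw [hz1 j hj, if_neg hj, zero_mul]
  have R2 : (M * Matrix.single i (i + 1) (1 : ℂ)) a k =
      if i + 1 = k then M a i else 0 := by
    rw [Matrix.mul_apply]
    rw [Finset.sum_congr rfl (fun j _ => show
        M a j * Matrix.single i (i + 1) (1 : ℂ) j k =
        (if j = i then (if i + 1 = k then M a i else 0) else 0) from ?_),
      Finset.sum_ite_eq' Finset.univ i]
    · simp
    · by_cases hj : j = i
      · rw [hj, if_pos rfl]
        by_cases hik : i + 1 = k <;> simp [Matrix.single, hik]
      · rw [hz2 j hj, if_neg hj, mul_zero]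
  simp only [Matrix.sub_apply]
  rw [L1, L2, R1, R2]
  have key1 : (if i = a ∧ cyc3 a (i + 1) k then M (i + 1) k else 0) =
      (if i = a then M (i + 1) k else 0) := by
    by_cases hia : i = a
    · by_cases hk : k = i
      · have hnc : ¬ cyc3 a (i + 1) k := by
          rw [← hia, hk]
          unfold cyc3
          rw [if_pos rfl]
          exact fun h => hii1 h.symm
        rw [if_neg (fun h => hnc h.2), if_pos hia, hk, h0]
      · rw [if_pos hia, if_pos ⟨hia, hia ▸ cycA hN i k hk⟩]
    · rw [if_neg hia, if_neg (fun h => hia h.1)]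
  have key2 : (if i + 1 = k ∧ cyc3 a i k then M a i else 0) =
      (if i + 1 = k then M a i else 0) := by
    by_cases hik : i + 1 = k
    · by_cases ha : a = i + 1
      · have hnc : ¬ cyc3 a i k := by
          rw [← hik, ha]
          unfold cyc3
          rw [if_pos rfl]
          exact fun h => hii1 h
        rw [if_neg (fun h => hnc h.2), if_pos hik, ha, h0]
      · rw [if_pos hik, if_pos ⟨hik, hik ▸ cycB hN i a ha⟩]
    · rw [if_neg hik, if_neg (fun h => hik h.1)]
  rw [key1, key2]
end

section
/- Write N = 2n + r with r ∈ {0,1}. For every link pattern π (involution of {1,…,N} with exactly r fixed points), there exists M ∈ M_N(ℂ) with zero diagonal and M • M = 0 such that for all i, j ∈ {1,…,N}: (M²)_{ii} = (M²)_{jj} if and only if j ∈ {i, π(i)}, where M² denotes the ordinary matrix square. (Every link pattern is realized on the Brauer loop scheme.) -/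
open Matrix BigOperators Finset

/-- Every link pattern is realized on the Brauer loop scheme: writing `N = 2n + r`
with `r = N % 2 ∈ {0,1}`, for every involution `π` of the indices with exactly `r`
fixed points there exists `M` with zero diagonal and `M • M = 0` such that
`(M²)_{ii} = (M²)_{jj}` if and only if `j ∈ {i, π(i)}` (ordinary matrix square). -/
theorem brauer_every_link_pattern_realized (N : ℕ) (hN : 0 < N)
    (π : Equiv.Perm (Fin N))
    (hinv : ∀ i, π (π i) = i)
    (hfix : (Finset.univ.filter (fun i => π i = i)).card = N % 2) :
    ∃ M : Matrix (Fin N) (Fin N) ℂ,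
      (∀ i, M i i = 0) ∧ cprod M M = 0 ∧
      (∀ i j : Fin N, (M * M) i i = (M * M) j j ↔ (j = i ∨ j = π i)) := by
  classical
  set m : Fin N → ℕ := fun i => min i.val ((π i).val) with hm
  set M : Matrix (Fin N) (Fin N) ℂ :=
    Matrix.of (fun i j => if j = π i ∧ i ≠ j then ((m i + 1 : ℕ) : ℂ) else 0) with hM
  have hMapp : ∀ i j, M i j = if j = π i ∧ i ≠ j then ((m i + 1 : ℕ) : ℂ) else 0 := by
    intro i j; rw [hM]; rfl
  have huniq : ∀ a b : Fin N, π a = a → π b = b → a = b := by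
    have hle : (Finset.univ.filter (fun i => π i = i)).card ≤ 1 := by
      rw [hfix]; omega
    intro a b ha hb
    exact Finset.card_le_one.mp hle a (by simp [ha]) b (by simp [hb])
  refine ⟨M, ?_, ?_, ?_⟩
  · intro i; rw [hMapp]; simp
  · ext i k
    simp only [cprod, Matrix.of_apply, Matrix.zero_apply]
    apply Finset.sum_eq_zero
    intro j hj
    simp only [Finset.mem_filter] at hj
    by_cases h1 : j = π i ∧ i ≠ j
    · by_cases h2 : k = π j ∧ j ≠ k
      · exfalso
        have hk : k = i := by rw [h2.1, h1.1, hinv]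
        have hc := hj.2
        rw [hk] at hc
        unfold cyc3 at hc
        simp only [if_pos rfl] at hc
        exact h1.2 hc.symm
      · rw [hMapp j k, if_neg h2, mul_zero]
    · rw [hMapp i j, if_neg h1, zero_mul]
  · have hdiag : ∀ i, (M * M) i i = if π i = i then 0 else ((m i + 1 : ℕ) : ℂ) ^ 2 := by
      intro i
      rw [Matrix.mul_apply]
      by_cases hfi : π i = i
      · rw [if_pos hfi]
        apply Finset.sum_eq_zero
        intro j _
        rw [hMapp i j]
        by_cases h1 : j = π i ∧ i ≠ j
        · exact absurd (by rw [h1.1, hfi]) (Ne.symm h1.2)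
        · rw [if_neg h1, zero_mul]
      · rw [if_neg hfi, Finset.sum_eq_single (π i)]
        · rw [hMapp, hMapp, if_pos ⟨rfl, fun h => hfi h.symm⟩,
            if_pos ⟨(hinv i).symm, fun h => hfi h⟩]
          have : m (π i) = m i := by
            simp only [hm, hinv]; exact min_comm _ _
          rw [this, sq]
        · intro j _ hj
          rw [hMapp i j, if_neg (fun h => hj h.1), zero_mul]
        · intro h; exact absurd (Finset.mem_univ _) h
    intro i j
    rw [hdiag i, hdiag j]
    by_cases hi : π i = i <;> by_cases hj : π j = j
    · rw [if_pos hi, if_pos hj]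
      have : j = i := huniq j i hj hi
      subst this; simp [hi]
    · rw [if_pos hi, if_neg hj]
      have hne : ((m j + 1 : ℕ) : ℂ) ^ 2 ≠ 0 := by
        apply pow_ne_zero
        exact_mod_cast Nat.succ_ne_zero (m j)
      constructor
      · intro h; exact absurd h.symm hne
      · rintro (rfl | rfl)
        · exact absurd hi hj
        · rw [hinv] at hj; exact absurd hi.symm hj
    · rw [if_neg hi, if_pos hj]
      have hne : ((m i + 1 : ℕ) : ℂ) ^ 2 ≠ 0 := by
        apply pow_ne_zero
        exact_mod_cast Nat.succ_ne_zero (m i)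
      constructor
      · intro h; exact absurd h hne
      · rintro (rfl | rfl)
        · exact absurd hj hi
        · exfalso; rw [hinv] at hj; exact hi hj.symm
    · rw [if_neg hi, if_neg hj]
      constructor
      · intro h
        have hnat : (m i + 1) ^ 2 = (m j + 1) ^ 2 := by exact_mod_cast h
        have hmm : m i = m j := by nlinarith
        simp only [hm] at hmm
        rcases min_cases i.val ((π i).val) with ⟨h1, _⟩ | ⟨h1, _⟩ <;>
          rcases min_cases j.val ((π j).val) with ⟨h2, _⟩ | ⟨h2, _⟩ <;>
          rw [h1, h2] at hmm
        · exact Or.inl (Fin.ext hmm.symm)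
        · right
          have : i = π j := Fin.ext hmm
          rw [this, hinv]
        · right
          exact (Fin.ext hmm : π i = j).symm
        · left
          exact (π.injective (Fin.ext hmm)).symm
      · rintro (rfl | rfl)
        · rfl
        · have : m (π i) = m i := by
            simp only [hm, hinv]; exact min_comm _ _
          rw [this]
end

section
/- For every M ∈ M_N(ℂ) with zero diagonal and M • M = 0, there exist a •-invertible matrix P and an involution π of {1,…,N} such that the weak upper triangle of P • M • P^{•−1} equals the strictly upper triangular part of the permutation matrix of π; that is, for all i ≤ j, (P • M • P^{•−1})_{ij} = 1 if i < j and j = π(i), and (P • M • P^{•−1})_{ij} = 0 otherwise. -/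
open Matrix BigOperators Finset

namespace BM

variable {n : ℕ}

/-- upper triangular (weakly): zero strictly below the diagonal -/
def UT (P : Matrix (Fin n) (Fin n) ℂ) : Prop := ∀ i j : Fin n, j < i → P i j = 0

lemma UT.one : UT (1 : Matrix (Fin n) (Fin n) ℂ) :=
  fun _ _ hij => Matrix.one_apply_ne hij.ne'

lemma UT.mul {P Q : Matrix (Fin n) (Fin n) ℂ} (hP : UT P) (hQ : UT Q) : UT (P * Q) := by
  intro i j hij
  rw [Matrix.mul_apply]
  refine Finset.sum_eq_zero fun m _ => ?_
  rcases lt_or_ge m i with h | h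
  · rw [hP i m h, zero_mul]
  · rw [hQ m j (lt_of_lt_of_le hij h), mul_zero]

def Smat (π : Equiv.Perm (Fin n)) : Matrix (Fin n) (Fin n) ℂ :=
  Matrix.of fun i j => if i < j ∧ j = π i then 1 else 0

def Reduces (A B : Matrix (Fin n) (Fin n) ℂ) : Prop :=
  ∃ P Pinv, UT P ∧ UT Pinv ∧ P * Pinv = 1 ∧ Pinv * P = 1 ∧ P * A * Pinv = B

lemma Reduces.trans {A B C : Matrix (Fin n) (Fin n) ℂ}
    (h1 : Reduces A B) (h2 : Reduces B C) : Reduces A C := by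
  obtain ⟨P, Pi, hP, hPi, h11, h12, h13⟩ := h1
  obtain ⟨Q, Qi, hQ, hQi, h21, h22, h23⟩ := h2
  refine ⟨Q * P, Pi * Qi, hQ.mul hP, hPi.mul hQi, ?_, ?_, ?_⟩
  · calc Q * P * (Pi * Qi) = Q * (P * Pi) * Qi := by simp only [mul_assoc]
    _ = 1 := by rw [h11, mul_one, h21]
  · calc Pi * Qi * (Q * P) = Pi * (Qi * Q) * P := by simp only [mul_assoc]
    _ = 1 := by rw [h22, mul_one, h12]
  · calc Q * P * A * (Pi * Qi) = Q * (P * A * Pi) * Qi := by simp only [mul_assoc]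
    _ = C := by rw [h13]; exact h23

/-- block matrix [[a, s],[0, S]] -/
def gblk (a : ℂ) (s : Fin n → ℂ) (S : Matrix (Fin n) (Fin n) ℂ) :
    Matrix (Fin (n+1)) (Fin (n+1)) ℂ :=
  Matrix.of (Fin.cons (Fin.cons a s) (fun i => Fin.cons 0 (S i)))

variable {a b : ℂ} {s t : Fin n → ℂ} {S T : Matrix (Fin n) (Fin n) ℂ}

@[simp] lemma gblk_zz : gblk a s S 0 0 = a := rfl
@[simp] lemma gblk_zs (j : Fin n) : gblk a s S 0 j.succ = s j := by simp [gblk]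
@[simp] lemma gblk_sz (i : Fin n) : gblk a s S i.succ 0 = 0 := by simp [gblk]
@[simp] lemma gblk_ss (i j : Fin n) : gblk a s S i.succ j.succ = S i j := by simp [gblk]

lemma vecMul_apply (v : Fin n → ℂ) (M : Matrix (Fin n) (Fin n) ℂ) (j : Fin n) :
    Matrix.vecMul v M j = ∑ m, v m * M m j := by
  simp [Matrix.vecMul, dotProduct]

lemma gblk_mul : gblk a s S * gblk b t T
    = gblk (a * b) (a • t + Matrix.vecMul s T) (S * T) := by
  ext i j
  induction i using Fin.cases with
  | zero =>
    induction j using Fin.cases with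
    | zero => simp [Matrix.mul_apply, Fin.sum_univ_succ]
    | succ j => simp [Matrix.mul_apply, Fin.sum_univ_succ, vecMul_apply]
  | succ i =>
    induction j using Fin.cases with
    | zero => simp [Matrix.mul_apply, Fin.sum_univ_succ]
    | succ j => simp [Matrix.mul_apply, Fin.sum_univ_succ]

lemma gblk_one : (gblk 1 0 1 : Matrix (Fin (n+1)) (Fin (n+1)) ℂ) = 1 := by
  ext i j
  induction i using Fin.cases with
  | zero =>
    induction j using Fin.cases with
    | zero => simp [Matrix.one_apply]
    | succ j => simp [Matrix.one_apply, (Fin.succ_ne_zero j).symm]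
  | succ i =>
    induction j using Fin.cases with
    | zero => simp [Matrix.one_apply, Fin.succ_ne_zero i]
    | succ j => simp [Matrix.one_apply, Fin.succ_inj]

lemma UT.gblk (hS : UT S) : UT (gblk a s S) := by
  intro i j h
  induction i using Fin.cases with
  | zero => exact absurd h (Fin.not_lt_zero _)
  | succ i =>
    induction j using Fin.cases with
    | zero => simp
    | succ j => simpa using hS i j (by simpa using h)

lemma vecMul_Smat (v : Fin n → ℂ) (π : Equiv.Perm (Fin n)) (hπ : ∀ i, π (π i) = i)
    (j : Fin n) :
    Matrix.vecMul v (Smat π) j = if π j < j then v (π j) else 0 := by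
  rw [vecMul_apply]
  simp only [Smat, Matrix.of_apply, mul_ite, mul_one, mul_zero]
  by_cases h : π j < j
  · rw [if_pos h, Finset.sum_eq_single (π j)]
    · rw [if_pos ⟨h, (hπ j).symm⟩]
    · intro m _ hm
      rw [if_neg]
      rintro ⟨-, rfl⟩
      exact hm (by rw [hπ])
    · intro hmem; exact absurd (Finset.mem_univ _) hmem
  · rw [if_neg h]
    refine Finset.sum_eq_zero fun m _ => ?_
    rw [if_neg]
    rintro ⟨h1, rfl⟩
    exact h (by rw [hπ]; exact h1)

theorem normal_form : ∀ (n : ℕ) (A : Matrix (Fin n) (Fin n) ℂ),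
    (∀ i j : Fin n, j ≤ i → A i j = 0) → A * A = 0 →
    ∃ π : Equiv.Perm (Fin n), (∀ i, π (π i) = i) ∧ Reduces A (Smat π) := by
  intro n
  induction n with
  | zero =>
    intro A _ _
    exact ⟨1, fun i => i.elim0, 1, 1, fun i _ _ => i.elim0, fun i _ _ => i.elim0,
      Subsingleton.elim _ _, Subsingleton.elim _ _, Subsingleton.elim _ _⟩
  | succ n ih =>
    intro A hA hAA
    set r : Fin n → ℂ := fun j => A 0 j.succ with hrdef
    set A' : Matrix (Fin n) (Fin n) ℂ := Matrix.of (fun i j => A i.succ j.succ) with hA'def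
    have hAg : A = gblk 0 r A' := by
      ext i j
      induction i using Fin.cases with
      | zero =>
        induction j using Fin.cases with
        | zero => simpa using hA 0 0 le_rfl
        | succ j => simp [hrdef]
      | succ i =>
        induction j using Fin.cases with
        | zero => simpa using hA i.succ 0 (Fin.zero_le _)
        | succ j => simp [hA'def]
    have hA'ut : ∀ i j : Fin n, j ≤ i → A' i j = 0 := fun i j h =>
      hA i.succ j.succ (Fin.succ_le_succ_iff.mpr h)
    have h1 : gblk 0 (Matrix.vecMul r A') (A' * A') = 0 := by
      have h := hAA
      rw [hAg, gblk_mul] at h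
      simpa using h
    have hA'A' : A' * A' = 0 := by
      ext i j
      have := congrFun (congrFun h1 i.succ) j.succ
      simpa using this
    have hrA' : Matrix.vecMul r A' = 0 := by
      funext j
      have := congrFun (congrFun h1 0) j.succ
      simpa using this
    obtain ⟨π', hπ', P', Pinv', hutP', hutPi', hPPi, hPiP, hconj⟩ := ih A' hA'ut hA'A'
    set s : Fin n → ℂ := Matrix.vecMul r Pinv' with hsdef
    have red1 : Reduces A (gblk 0 s (Smat π')) := by
      refine ⟨gblk 1 0 P', gblk 1 0 Pinv', hutP'.gblk, hutPi'.gblk, ?_, ?_, ?_⟩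
      · rw [gblk_mul, hPPi]; simp [gblk_one]
      · rw [gblk_mul, hPiP]; simp [gblk_one]
      · rw [hAg, gblk_mul, gblk_mul, hconj]
        simp [hsdef]
    have hsS : Matrix.vecMul s (Smat π') = 0 := by
      have e1 : Pinv' * (P' * A' * Pinv') = A' * Pinv' := by
        calc Pinv' * (P' * A' * Pinv') = (Pinv' * P') * (A' * Pinv') := by
              simp only [mul_assoc]
        _ = A' * Pinv' := by rw [hPiP, one_mul]
      rw [hsdef, ← hconj, Matrix.vecMul_vecMul, e1, ← Matrix.vecMul_vecMul, hrA',
        Matrix.zero_vecMul]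
    have hleft : ∀ i, i < π' i → s i = 0 := by
      intro i h
      have h2 := congrFun hsS (π' i)
      rw [vecMul_Smat s π' hπ', hπ' i, if_pos h] at h2
      simpa using h2
    set tt : Fin n → ℂ := fun j => if π' j = j then s j else 0 with htdef
    set q : Fin n → ℂ := fun i => if i < π' i then -(s (π' i)) else 0 with hqdef
    have hst : s + Matrix.vecMul q (Smat π') = tt := by
      funext j
      rw [Pi.add_apply, vecMul_Smat q π' hπ']
      rcases lt_trichotomy (π' j) j with h | h | h
      · rw [if_pos h]
        simp only [hqdef, htdef]
        rw [if_pos (show π' j < π' (π' j) by rw [hπ' j]; exact h), hπ' j,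
          if_neg h.ne]
        ring
      · rw [if_neg (by rw [h]; exact lt_irrefl j)]
        simp only [htdef]
        rw [if_pos h, add_zero]
      · rw [if_neg (not_lt.mpr h.le)]
        simp only [htdef]
        rw [if_neg (ne_of_gt h), hleft j h, add_zero]
    have red2 : Reduces (gblk 0 s (Smat π')) (gblk 0 tt (Smat π')) := by
      refine ⟨gblk 1 q 1, gblk 1 (-q) 1, UT.one.gblk, UT.one.gblk, ?_, ?_, ?_⟩
      · rw [gblk_mul]; simp [gblk_one]
      · rw [gblk_mul]; simp [gblk_one]
      · rw [gblk_mul, gblk_mul]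
        simp only [one_mul, mul_one, zero_mul, mul_zero, zero_smul, zero_add,
          one_smul, Matrix.vecMul_one, smul_neg, neg_zero, add_zero]
        rw [hst]
    by_cases ht : tt = 0
    · -- π fixes 0
      have hf : Function.Involutive
          (Fin.cases 0 (fun j => (π' j).succ) : Fin (n+1) → Fin (n+1)) := by
        intro m
        induction m using Fin.cases with
        | zero => simp
        | succ j => simp [hπ' j]
      refine ⟨hf.toPerm _, fun i => by simpa using hf i, ?_⟩
      have hS : Smat (hf.toPerm _) = gblk 0 0 (Smat π') := by
        ext i j
        simp only [Smat, Matrix.of_apply, Function.Involutive.coe_toPerm]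
        induction i using Fin.cases with
        | zero =>
          induction j using Fin.cases with
          | zero => simp
          | succ j => simp [Fin.succ_ne_zero j]
        | succ i =>
          induction j using Fin.cases with
          | zero => simp
          | succ j => simp [Fin.succ_lt_succ_iff, Fin.succ_inj]
      rw [hS]
      have hred := red1.trans red2
      rwa [ht] at hred
    · have hex : ∃ j, tt j ≠ 0 := Function.ne_iff.mp ht
      have hKne : (univ.filter (fun j => tt j ≠ 0)).Nonempty :=
        ⟨hex.choose, by simpa using hex.choose_spec⟩
      set k := (univ.filter (fun j => tt j ≠ 0)).min' hKne with hkdef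
      have htk : tt k ≠ 0 := by
        have := (univ.filter (fun j => tt j ≠ 0)).min'_mem hKne
        simpa using this
      have hmin : ∀ j, j < k → tt j = 0 := by
        intro j hj
        by_contra h
        exact absurd ((univ.filter (fun j => tt j ≠ 0)).min'_le j (by simpa using h))
          (not_le.mpr hj)
      have hπk : π' k = k := by
        by_contra h
        apply htk
        simp only [htdef]
        rw [if_neg h]
      set u : Fin n → ℂ := (tt k)⁻¹ • tt with hudef
      have huk : u k = 1 := by
        simp only [hudef, Pi.smul_apply, smul_eq_mul]
        exact inv_mul_cancel₀ htk
      have humin : ∀ j, j < k → u j = 0 := fun j hj => by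
        simp [hudef, hmin j hj]
      have hufix : ∀ j, u j ≠ 0 → π' j = j := by
        intro j hj
        by_contra h
        apply hj
        simp only [hudef, Pi.smul_apply, smul_eq_mul, htdef]
        rw [if_neg h, mul_zero]
      have red3 : Reduces (gblk 0 tt (Smat π')) (gblk 0 u (Smat π')) := by
        refine ⟨gblk (tt k)⁻¹ 0 1, gblk (tt k) 0 1, UT.one.gblk, UT.one.gblk, ?_, ?_, ?_⟩
        · rw [gblk_mul]
          simp [inv_mul_cancel₀ htk, gblk_one]
        · rw [gblk_mul]
          simp [mul_inv_cancel₀ htk, gblk_one]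
        · rw [gblk_mul, gblk_mul]
          simp only [mul_zero, zero_mul, mul_one, one_mul, smul_zero, zero_smul,
            add_zero, zero_add, Matrix.vecMul_one, Matrix.zero_vecMul]
          rfl
      set E : Matrix (Fin n) (Fin n) ℂ :=
        Matrix.of (fun i m => if i = k ∧ m ≠ k then u m else 0) with hEdef
      have hEapp : ∀ i m, E i m = if i = k ∧ m ≠ k then u m else 0 := fun i m => rfl
      have hEut : UT E := by
        intro i m h
        rw [hEapp]
        split_ifs with hc
        · rcases hc with ⟨rfl, -⟩; exact humin m h
        · rfl
      have hEE : E * E = 0 := by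
        ext i m
        rw [Matrix.mul_apply, Matrix.zero_apply]
        refine Finset.sum_eq_zero fun j _ => ?_
        rw [hEapp, hEapp]
        by_cases h1 : i = k ∧ j ≠ k
        · rw [if_pos h1, if_neg (fun h2 => h1.2 h2.1), mul_zero]
        · rw [if_neg h1, zero_mul]
      have hES : E * Smat π' = 0 := by
        ext i m
        rw [Matrix.mul_apply, Matrix.zero_apply]
        refine Finset.sum_eq_zero fun j _ => ?_
        rw [hEapp]
        split_ifs with h1
        · rcases eq_or_ne (u j) 0 with h | h
          · rw [h, zero_mul]
          · have hfix := hufix j h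
            have hz : Smat π' j m = 0 := by
              simp only [Smat, Matrix.of_apply]
              rw [if_neg]
              rintro ⟨hlt, rfl⟩
              rw [hfix] at hlt
              exact lt_irrefl _ hlt
            rw [hz, mul_zero]
        · exact zero_mul _
      have hSE : Smat π' * E = 0 := by
        ext i m
        rw [Matrix.mul_apply, Matrix.zero_apply]
        refine Finset.sum_eq_zero fun j _ => ?_
        rw [hEapp]
        split_ifs with h1
        · rcases h1 with ⟨rfl, -⟩
          have hz : Smat π' i k = 0 := by
            simp only [Smat, Matrix.of_apply]
            rw [if_neg]
            rintro ⟨hlt, hk2⟩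
            have hik : i = k := by rw [← hπk, hk2, hπ' i]
            rw [hik] at hlt
            exact lt_irrefl _ hlt
          rw [hz, zero_mul]
        · exact mul_zero _
      have hmulE1 : (1 + E) * (1 - E) = 1 := by
        rw [add_mul, one_mul, mul_sub, mul_one, hEE]
        abel
      have hmulE2 : (1 - E) * (1 + E) = 1 := by
        rw [sub_mul, one_mul, mul_add, mul_one, hEE]
        abel
      have hvecuE : ∀ j, Matrix.vecMul u E j = if j = k then 0 else u j := by
        intro j
        rw [vecMul_apply, Finset.sum_eq_single k]
        · rw [hEapp]
          by_cases hj : j = k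
          · rw [if_pos hj, if_neg (fun h => h.2 hj), mul_zero]
          · rw [if_neg hj, if_pos ⟨rfl, hj⟩, huk, one_mul]
        · intro m _ hm
          rw [hEapp, if_neg (fun h => hm h.1), mul_zero]
        · intro h; exact absurd (mem_univ k) h
      have hvecu : Matrix.vecMul u (1 - E) = (fun j => if j = k then 1 else 0) := by
        funext j
        rw [Matrix.vecMul_sub, Matrix.vecMul_one, Pi.sub_apply, hvecuE j]
        by_cases hj : j = k
        · rw [if_pos hj, if_pos hj, sub_zero, hj, huk]
        · rw [if_neg hj, if_neg hj, sub_self]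
      have hut1E : UT (1 + E) := by
        intro i m h
        rw [Matrix.add_apply, UT.one i m h, hEut i m h, add_zero]
      have hut2E : UT (1 - E) := by
        intro i m h
        rw [Matrix.sub_apply, UT.one i m h, hEut i m h, sub_zero]
      have red4 : Reduces (gblk 0 u (Smat π'))
          (gblk 0 (fun j => if j = k then 1 else 0) (Smat π')) := by
        refine ⟨gblk 1 0 (1 + E), gblk 1 0 (1 - E), hut1E.gblk, hut2E.gblk, ?_, ?_, ?_⟩
        · rw [gblk_mul, hmulE1]; simp [gblk_one]
        · rw [gblk_mul, hmulE2]; simp [gblk_one]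
        · rw [gblk_mul, gblk_mul]
          have hm2 : (1 + E) * Smat π' = Smat π' := by rw [add_mul, one_mul, hES, add_zero]
          have hm3 : Smat π' * (1 - E) = Smat π' := by rw [mul_sub, mul_one, hSE, sub_zero]
          simp only [zero_mul, mul_one, one_mul, mul_zero, smul_zero, zero_smul,
            zero_add, add_zero, one_smul, Matrix.zero_vecMul]
          rw [hm2, hm3, hvecu]
      have hf : Function.Involutive
          (Fin.cases k.succ (fun j => if j = k then 0 else (π' j).succ) :
            Fin (n+1) → Fin (n+1)) := by
        intro m
        induction m using Fin.cases with
        | zero => simp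
        | succ j =>
          by_cases hj : j = k
          · subst hj; simp
          · have hne : π' j ≠ k := fun h => hj (by rw [← hπ' j, h, hπk])
            simp [hj, hne, hπ' j]
      refine ⟨hf.toPerm _, fun i => by simpa using hf i, ?_⟩
      have hS : Smat (hf.toPerm _)
          = gblk 0 (fun j => if j = k then 1 else 0) (Smat π') := by
        ext i j
        simp only [Smat, Matrix.of_apply, Function.Involutive.coe_toPerm]
        induction i using Fin.cases with
        | zero =>
          induction j using Fin.cases with
          | zero => simp
          | succ j => simp [Fin.succ_pos, Fin.succ_inj]
        | succ i =>
          induction j using Fin.cases with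
          | zero => simp
          | succ j =>
            by_cases hik : i = k
            · subst hik
              simp only [Fin.cases_succ, if_pos rfl, gblk_ss, Smat, Matrix.of_apply]
              rw [if_neg (fun h => Fin.succ_ne_zero j h.2), if_neg]
              rintro ⟨hlt, rfl⟩
              rw [hπk] at hlt
              exact lt_irrefl _ hlt
            · simp [hik, Fin.succ_lt_succ_iff, Fin.succ_inj]
      rw [hS]
      exact red1.trans (red2.trans (red3.trans red4))


variable {N : ℕ}

lemma cyc3_iff_of_le {i k : Fin N} (h : i ≤ k) (j : Fin N) :
    cyc3 i j k ↔ (i ≤ j ∧ j ≤ k) := by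
  unfold cyc3
  rcases eq_or_lt_of_le h with rfl | hlt
  · rw [if_pos rfl]
    constructor
    · rintro rfl; exact ⟨le_rfl, le_rfl⟩
    · rintro ⟨h1, h2⟩; exact le_antisymm h2 h1
  · rw [if_neg hlt.ne]
    constructor
    · rintro (h1 | ⟨-, h2⟩ | ⟨h2, -⟩)
      · exact h1
      · exact absurd h2 (not_le.mpr hlt)
      · exact absurd h2 (not_le.mpr hlt)
    · exact Or.inl

lemma cprod_entry (P Q : Matrix (Fin N) (Fin N) ℂ) {i k : Fin N} (h : i ≤ k) :
    cprod P Q i k = ∑ j ∈ univ.filter (fun j => i ≤ j ∧ j ≤ k), P i j * Q j k := by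
  unfold cprod
  rw [Matrix.of_apply]
  congr 1
  apply Finset.filter_congr
  intro j _
  simpa using cyc3_iff_of_le h j

lemma sum_filter_eq_mul {P Q : Matrix (Fin N) (Fin N) ℂ} (hP : UT P) (hQ : UT Q)
    {i k : Fin N} :
    ∑ j ∈ univ.filter (fun j => i ≤ j ∧ j ≤ k), P i j * Q j k = (P * Q) i k := by
  rw [Matrix.mul_apply]
  apply Finset.sum_subset (Finset.filter_subset _ _)
  intro j _ hj
  simp only [Finset.mem_filter, Finset.mem_univ, true_and, not_and, not_le] at hj
  rcases lt_or_ge j i with h1 | h1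
  · rw [hP i j h1, zero_mul]
  · rw [hQ j k (hj h1), mul_zero]

lemma cprod_eq_mul {P Q : Matrix (Fin N) (Fin N) ℂ} (hP : UT P) (hQ : UT Q)
    {i k : Fin N} (h : i ≤ k) : cprod P Q i k = (P * Q) i k := by
  rw [cprod_entry P Q h, sum_filter_eq_mul hP hQ]

lemma cprod_lower {P Q : Matrix (Fin N) (Fin N) ℂ} (hP : UT P) (hQ : UT Q)
    {i k : Fin N} (h : k < i) : cprod P Q i k = 0 := by
  unfold cprod
  rw [Matrix.of_apply]
  refine Finset.sum_eq_zero fun j hj => ?_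
  rw [Finset.mem_filter] at hj
  have hc := hj.2
  unfold cyc3 at hc
  rw [if_neg h.ne'] at hc
  rcases hc with ⟨-, h2⟩ | ⟨h2, -⟩ | ⟨-, h1⟩
  · rw [hP i j (lt_of_le_of_lt h2 h), zero_mul]
  · rw [hP i j (lt_of_le_of_lt h2 h), zero_mul]
  · rw [hQ j k (lt_of_lt_of_le h h1), mul_zero]

end BM

/-- Melnikov normal form under `•`-conjugation: for every `M` with zero diagonal and
`M • M = 0` there are a `•`-invertible `P` (with `•`-inverse `Pinv`) and an involution
`π` such that the weak upper triangle of `P • M • Pinv` is the strictly upper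
triangular part of the permutation matrix of `π`: for `i ≤ j`,
`(P • M • Pinv)_{ij} = 1` if `i < j` and `j = π(i)`, and `= 0` otherwise. -/
theorem brauer_melnikov_normal_form (N : ℕ) (hN : 0 < N)
    (M : Matrix (Fin N) (Fin N) ℂ)
    (hdiag : ∀ i, M i i = 0) (hMM : cprod M M = 0) :
    ∃ P Pinv : Matrix (Fin N) (Fin N) ℂ,
      cprod P Pinv = 1 ∧ cprod Pinv P = 1 ∧
      ∃ π : Equiv.Perm (Fin N), (∀ i, π (π i) = i) ∧
        ∀ i j : Fin N, i ≤ j →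
          cprod (cprod P M) Pinv i j = if i < j ∧ j = π i then 1 else 0 := by
  classical
  open BM in
  set A : Matrix (Fin N) (Fin N) ℂ := Matrix.of (fun i j => if i ≤ j then M i j else 0)
    with hAdef
  have hAapp : ∀ i j, A i j = if i ≤ j then M i j else 0 := fun i j => rfl
  have hSUT : ∀ i j : Fin N, j ≤ i → A i j = 0 := by
    intro i j h
    rw [hAapp]
    split_ifs with h2
    · obtain rfl := le_antisymm h2 h
      exact hdiag i
    · rfl
  have hUT : BM.UT A := fun i j h => hSUT i j h.le
  have hAM : ∀ j k : Fin N, j ≤ k → A j k = M j k := fun j k h => by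
    rw [hAapp, if_pos h]
  have hAA : A * A = 0 := by
    ext i k
    rw [Matrix.zero_apply, Matrix.mul_apply]
    rcases le_or_gt i k with h | h
    · have h0 : cprod M M i k = 0 := by rw [hMM]; rfl
      rw [BM.cprod_entry M M h] at h0
      calc ∑ j, A i j * A j k
          = ∑ j ∈ univ.filter (fun j => i ≤ j ∧ j ≤ k), A i j * A j k := by
            symm
            apply Finset.sum_subset (Finset.filter_subset _ _)
            intro j _ hj
            simp only [Finset.mem_filter, Finset.mem_univ, true_and, not_and,
              not_le] at hj
            rcases lt_or_ge j i with h1 | h1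
            · rw [hSUT i j h1.le, zero_mul]
            · rw [hSUT j k (hj h1).le, mul_zero]
        _ = ∑ j ∈ univ.filter (fun j => i ≤ j ∧ j ≤ k), M i j * M j k := by
            apply Finset.sum_congr rfl
            intro j hj
            rw [Finset.mem_filter] at hj
            rw [hAM i j hj.2.1, hAM j k hj.2.2]
        _ = 0 := h0
    · refine Finset.sum_eq_zero fun j _ => ?_
      rcases le_or_gt j i with h1 | h1
      · rw [hSUT i j h1, zero_mul]
      · rw [hSUT j k (h.trans h1).le, mul_zero]
  obtain ⟨π, hπ, P, Pinv, hutP, hutPi, hPPi, hPiP, hfin⟩ := BM.normal_form N A hSUT hAA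
  refine ⟨P, Pinv, ?_, ?_, π, hπ, ?_⟩
  · ext i k
    rcases le_or_gt i k with h | h
    · rw [BM.cprod_eq_mul hutP hutPi h, hPPi]
    · rw [BM.cprod_lower hutP hutPi h]
      exact (Matrix.one_apply_ne h.ne').symm
  · ext i k
    rcases le_or_gt i k with h | h
    · rw [BM.cprod_eq_mul hutPi hutP h, hPiP]
    · rw [BM.cprod_lower hutPi hutP h]
      exact (Matrix.one_apply_ne h.ne').symm
  · intro i j hij
    have h2 : ∀ m : Fin N, i ≤ m → cprod P M i m = (P * A) i m := by
      intro m h1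
      rw [BM.cprod_entry P M h1]
      rw [show (∑ l ∈ univ.filter (fun l => i ≤ l ∧ l ≤ m), P i l * M l m)
          = ∑ l ∈ univ.filter (fun l => i ≤ l ∧ l ≤ m), P i l * A l m from
        Finset.sum_congr rfl fun l hl => by
          rw [Finset.mem_filter] at hl
          rw [hAM l m hl.2.2]]
      exact BM.sum_filter_eq_mul hutP hUT
    have key : cprod (cprod P M) Pinv i j = (P * A * Pinv) i j := by
      rw [BM.cprod_entry _ _ hij]
      calc ∑ m ∈ univ.filter (fun m => i ≤ m ∧ m ≤ j), cprod P M i m * Pinv m j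
          = ∑ m ∈ univ.filter (fun m => i ≤ m ∧ m ≤ j), (P * A) i m * Pinv m j := by
            apply Finset.sum_congr rfl
            intro m hm
            rw [Finset.mem_filter] at hm
            rw [h2 m hm.2.1]
        _ = (P * A * Pinv) i j := BM.sum_filter_eq_mul (hutP.mul hUT) hutPi
    rw [key, hfin]
    rfl
end

section
/- Write N = 2n + r with r ∈ {0,1}, and let π be a link pattern (involution of {1,…,N} with exactly r fixed points). Let t and t' be diagonal matrices with diagonal entries t_1,…,t_N and t'_1,…,t'_N, and let P ∈ M_N(ℂ) satisfy P_{ii} = 1 for all i. If P • (π̲ t) = (π̲ t') • P, then t_i = t'_i for every i with π(i) ≠ i; in particular, each orbit of the group U = {P : P_{ii} = 1 for all i} acting on E by •-conjugation contains at most one matrix of the form π̲ t. -/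
open Matrix BigOperators Finset

/-- Uniqueness of the diagonal representative in a `•`-conjugation orbit: write
`N = 2n + r`, `r ∈ {0,1}`, let `π` be a link pattern (involution with exactly `r` fixed
points) and let `π̲ t` denote the matrix with `(π̲ t)_{ij} = t_j` iff `j = π(i)`,
`j ≠ i`.  If `P` has all diagonal entries `1` and `P • (π̲ t) = (π̲ t') • P`, then
`t_i = t'_i` for every non-fixed point `i` of `π`; in particular each orbit of the group
`U = {P : P_{ii} = 1}` contains at most one matrix of the form `π̲ t`. -/
theorem brauer_orbit_representative_unique (n r N : ℕ) (hr : r = 0 ∨ r = 1)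
    (hN : N = 2 * n + r) (hpos : 0 < N)
    (π : Equiv.Perm (Fin N)) (hinv : ∀ i, π (π i) = i)
    (hfix : (Finset.univ.filter (fun i => π i = i)).card = r)
    (t t' : Fin N → ℂ) (P : Matrix (Fin N) (Fin N) ℂ)
    (hP : ∀ i, P i i = 1)
    (h : cprod P (Matrix.of fun a b => if b = π a ∧ b ≠ a then t b else 0) =
         cprod (Matrix.of fun a b => if b = π a ∧ b ≠ a then t' b else 0) P) :
    ∀ i : Fin N, π i ≠ i → t i = t' i := by
  intro i hi
  have key := congrFun (congrFun h (π i)) i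
  simp only [cprod, Matrix.of_apply] at key
  have hpi : π (π i) = i := hinv i
  have hL : ∑ j ∈ Finset.univ.filter (fun j => cyc3 (π i) j i),
      P (π i) j * (if i = π j ∧ i ≠ j then t i else 0) = t i := by
    rw [Finset.sum_eq_single (π i)]
    · rw [if_pos ⟨hpi.symm, Ne.symm hi⟩, hP]
      ring
    · intro j hj hne
      rw [if_neg]
      · ring
      · rintro ⟨hj1, -⟩
        exact hne (by rw [hj1, hinv])
    · intro hmem
      exfalso
      apply hmem
      simp only [Finset.mem_filter, Finset.mem_univ, true_and]
      unfold cyc3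
      rw [if_neg hi]
      rcases le_total (π i) i with h' | h'
      · exact Or.inl ⟨le_refl _, h'⟩
      · exact Or.inr (Or.inr ⟨h', le_refl _⟩)
  have hR : ∑ j ∈ Finset.univ.filter (fun j => cyc3 (π i) j i),
      (if j = π (π i) ∧ j ≠ π i then t' j else 0) * P j i = t' i := by
    rw [Finset.sum_eq_single i]
    · rw [if_pos ⟨hpi.symm, Ne.symm hi⟩, hP]
      ring
    · intro j hj hne
      rw [if_neg]
      · ring
      · rintro ⟨hj1, -⟩
        exact hne (hj1.trans hpi)
    · intro hmem
      exfalso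
      apply hmem
      simp only [Finset.mem_filter, Finset.mem_univ, true_and]
      unfold cyc3
      rw [if_neg hi]
      rcases le_total (π i) i with h' | h'
      · exact Or.inl ⟨h', le_refl _⟩
      · exact Or.inr (Or.inl ⟨le_refl _, h'⟩)
  rw [hL, hR] at key
  exact key
end

section
/- Write N = 2n + r with r ∈ {0,1}, and let π be a link pattern (involution of {1,…,N} with exactly r fixed points). Suppose i, l ∈ {1,…,N} are such that there is no j with both ⟨i ≤ j ≤ l⟩ and ⟨i ≤ π(j) ≤ l⟩ (i.e., π has no chord with both endpoints in the cyclic interval from i to l). Then for every •-invertible P with •-inverse P^{•−1} and every diagonal matrix t, the matrix M = P • (π̲ t) • P^{•−1} satisfies M_{jk} = 0 for all j, k with ⟨i ≤ j ≤ k ≤ l⟩; in particular M_{il} = 0. -/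
open Matrix BigOperators Finset

lemma cyc_trans {N : ℕ} {j a b k : Fin N} (h1 : cyc3 j a b) (h2 : cyc3 j b k) :
    cyc3 j a k := by
  simp only [cyc3, Fin.le_def, Fin.ext_iff] at *
  split_ifs at * <;> omega

lemma cyc_mono {N : ℕ} {i j x k l : Fin N} (h1 : cyc4 i j k l) (h2 : cyc3 j x k) :
    cyc3 i x l := by
  simp only [cyc3, cyc4, Fin.le_def, Fin.ext_iff] at *
  split_ifs at * <;> omega

/-- Linear equations on the component `E_π`: write `N = 2n + r`, `r ∈ {0,1}`, and let
`π` be a link pattern (involution with exactly `r` fixed points).  Suppose `i, l` are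
such that no `j` satisfies both `⟨i ≤ j ≤ l⟩` and `⟨i ≤ π(j) ≤ l⟩` (no chord of `π`
inside the cyclic interval from `i` to `l`).  Then for every `•`-invertible `P` with
`•`-inverse `Pinv` and every diagonal matrix with entries `t`, the matrix
`M = P • (π̲ t) • Pinv` vanishes on the whole southwest triangle: `M_{jk} = 0` whenever
`⟨i ≤ j ≤ k ≤ l⟩`; in particular `M_{il} = 0`. -/
theorem brauer_linear_conditions (n r N : ℕ) (hr : r = 0 ∨ r = 1)
    (hN : N = 2 * n + r) (hpos : 0 < N)
    (π : Equiv.Perm (Fin N)) (hinv : ∀ i, π (π i) = i)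
    (hfix : (Finset.univ.filter (fun i => π i = i)).card = r)
    (i l : Fin N)
    (hchord : ∀ j : Fin N, ¬ (cyc3 i j l ∧ cyc3 i (π j) l))
    (P Pinv : Matrix (Fin N) (Fin N) ℂ)
    (hP : cprod P Pinv = 1) (hP' : cprod Pinv P = 1)
    (t : Fin N → ℂ)
    (M : Matrix (Fin N) (Fin N) ℂ)
    (hM : M = cprod
      (cprod P (Matrix.of fun a b => if b = π a ∧ b ≠ a then t b else 0)) Pinv) :
    ∀ j k : Fin N, cyc4 i j k l → M j k = 0 := by
  intro j k hjk
  subst hM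
  simp only [cprod, Matrix.of_apply]
  apply Finset.sum_eq_zero
  intro b hb
  simp only [Finset.mem_filter, Finset.mem_univ, true_and] at hb
  have h0 : (∑ a ∈ Finset.univ.filter (fun a => cyc3 j a b),
      P j a * (if b = π a ∧ b ≠ a then t b else 0)) = 0 := by
    apply Finset.sum_eq_zero
    intro a ha
    simp only [Finset.mem_filter, Finset.mem_univ, true_and] at ha
    by_cases hcond : b = π a ∧ b ≠ a
    · exact absurd ⟨cyc_mono hjk (cyc_trans ha hb), hcond.1 ▸ cyc_mono hjk hb⟩ (hchord a)
    · simp [hcond]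
  rw [h0, zero_mul]
end

section
/- Let N = 2n be even with n ≥ 1. If M ∈ M_N(ℂ) satisfies M_{il} = 0 for every pair (i,l) with (l − i) mod N < n (equivalently, for every l in the cyclic interval ⟨i ≤ l < i+n⟩, including l = i), then M • M = 0. Hence the linear subspace cut out by these equations lies inside the Brauer loop scheme E; it is the component E_{π_0} corresponding to the maximally crossing link pattern π_0(i) = i + n mod 2n. -/
open Matrix BigOperators Finset

/-- Cyclic distance computed explicitly. -/
lemma dval {N : ℕ} (a b : Fin N) :
    (N + b.val - a.val) % N = if a.val ≤ b.val then b.val - a.val else N + b.val - a.val := by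
  have ha := a.isLt
  have hb := b.isLt
  split
  · have e : N + b.val - a.val = (b.val - a.val) + N := by omega
    rw [e, Nat.add_mod_right, Nat.mod_eq_of_lt (by omega)]
  · exact Nat.mod_eq_of_lt (by omega)

/-- Let `N = 2n` be even, `n ≥ 1`.  If `M_{il} = 0` whenever `(l − i) mod N < n`
(i.e. `l` lies in the cyclic interval `⟨i ≤ l < i + n⟩`, including `l = i`), then
`M • M = 0`.  Hence this linear subspace lies inside the Brauer loop scheme `E`; it is
the component `E_{π₀}` for the maximally crossing link pattern `π₀(i) = i + n`. -/
theorem brauer_max_crossing_component (n N : ℕ) (hn : 1 ≤ n) (hN : N = 2 * n)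
    (M : Matrix (Fin N) (Fin N) ℂ)
    (h : ∀ i l : Fin N, (N + l.val - i.val) % N < n → M i l = 0) :
    cprod M M = 0 := by
  ext i k
  show (∑ j ∈ Finset.univ.filter (fun j => cyc3 i j k), M i j * M j k) = 0
  refine Finset.sum_eq_zero fun j hj => ?_
  have hc : cyc3 i j k := (Finset.mem_filter.mp hj).2
  have hi := i.isLt
  have hjlt := j.isLt
  have hk := k.isLt
  unfold cyc3 at hc
  by_cases hik : i = k
  · rw [if_pos hik] at hc
    have : M i j = 0 := by
      apply h
      rw [dval, hc]
      simp only [Fin.val_fin_le]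
      split <;> omega
    rw [this, zero_mul]
  · rw [if_neg hik] at hc
    have hik' : i.val ≠ k.val := fun e => hik (Fin.ext e)
    by_cases h1 : (N + j.val - i.val) % N < n
    · rw [h i j h1, zero_mul]
    · have h2 : (N + k.val - j.val) % N < n := by
        rw [dval] at h1 ⊢
        simp only [Fin.le_def] at hc
        rcases hc with ⟨a, b⟩ | ⟨a, b⟩ | ⟨a, b⟩ <;> split <;> split at h1 <;> omega
      rw [h j k h2, mul_zero]
end

section
/- Write N = 2n + r with r ∈ {0,1} and n ≥ 1. Let M ∈ M_N(ℂ) have the block form M = [[A, X],[Y, B]], where A is an n×n strictly lower triangular block (rows and columns 1,…,n), B is an (n+r)×(n+r) strictly lower triangular block (rows and columns n+1,…,N), X is the n×(n+r) block in rows 1,…,n and columns n+1,…,N, and Y is the (n+r)×n block in rows n+1,…,N and columns 1,…,n. Then M • M = 0 if and only if both ordinary products XY and YX are upper triangular, i.e., (XY)_{ab} = 0 for all a > b and (YX)_{cd} = 0 for all c > d. (This identifies the permutation sector E_P of the Brauer loop scheme with the upper-upper scheme.) -/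
open Matrix BigOperators Finset

lemma sum_filter_congr' {N : ℕ} (f : Fin N → ℂ) (P Q : Fin N → Prop)
    [DecidablePred P] [DecidablePred Q]
    (h : ∀ j, f j ≠ 0 → (P j ↔ Q j)) :
    ∑ j ∈ Finset.univ.filter P, f j = ∑ j ∈ Finset.univ.filter Q, f j := by
  rw [Finset.sum_filter, Finset.sum_filter]
  refine Finset.sum_congr rfl fun j _ => ?_
  by_cases hf : f j = 0
  · simp [hf]
  · exact if_congr (h j hf) rfl rfl

lemma term_zero' {n N : ℕ} (M : Matrix (Fin N) (Fin N) ℂ)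
    (hA : ∀ i j : Fin N, i.val < n → j.val < n → i.val ≤ j.val → M i j = 0)
    (hB : ∀ i j : Fin N, n ≤ i.val → n ≤ j.val → i.val ≤ j.val → M i j = 0)
    (i j k : Fin N)
    (h : (i.val < n ∧ j.val < n ∧ i.val ≤ j.val) ∨ (n ≤ i.val ∧ n ≤ j.val ∧ i.val ≤ j.val)
       ∨ (j.val < n ∧ k.val < n ∧ j.val ≤ k.val) ∨ (n ≤ j.val ∧ n ≤ k.val ∧ j.val ≤ k.val)) :
    M i j * M j k = 0 := by
  rcases h with ⟨h1,h2,h3⟩|⟨h1,h2,h3⟩|⟨h1,h2,h3⟩|⟨h1,h2,h3⟩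
  · rw [hA i j h1 h2 h3, zero_mul]
  · rw [hB i j h1 h2 h3, zero_mul]
  · rw [hA j k h1 h2 h3, mul_zero]
  · rw [hB j k h1 h2 h3, mul_zero]

lemma cyc_sum_LL' {n N : ℕ} (M : Matrix (Fin N) (Fin N) ℂ)
    (hA : ∀ i j : Fin N, i.val < n → j.val < n → i.val ≤ j.val → M i j = 0)
    (hB : ∀ i j : Fin N, n ≤ i.val → n ≤ j.val → i.val ≤ j.val → M i j = 0)
    (i k : Fin N) (hi : i.val < n) (hk : k.val < n) (hki : k.val < i.val) :
    ∑ j ∈ Finset.univ.filter (fun j => cyc3 i j k), M i j * M j k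
      = ∑ j ∈ Finset.univ.filter (fun j : Fin N => n ≤ j.val), M i j * M j k := by
  have hik : i ≠ k := by intro h; subst h; omega
  apply sum_filter_congr'
  intro j hf
  constructor
  · intro hcyc
    by_contra hq
    push_neg at hq
    apply hf
    unfold cyc3 at hcyc; rw [if_neg hik] at hcyc; simp only [Fin.le_def] at hcyc
    apply term_zero' M hA hB; omega
  · intro hq
    unfold cyc3; rw [if_neg hik]; simp only [Fin.le_def]; omega

lemma cyc_sum_HH' {n N : ℕ} (M : Matrix (Fin N) (Fin N) ℂ)
    (hA : ∀ i j : Fin N, i.val < n → j.val < n → i.val ≤ j.val → M i j = 0)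
    (hB : ∀ i j : Fin N, n ≤ i.val → n ≤ j.val → i.val ≤ j.val → M i j = 0)
    (i k : Fin N) (hi : n ≤ i.val) (hk : n ≤ k.val) (hki : k.val < i.val) :
    ∑ j ∈ Finset.univ.filter (fun j => cyc3 i j k), M i j * M j k
      = ∑ j ∈ Finset.univ.filter (fun j : Fin N => j.val < n), M i j * M j k := by
  have hik : i ≠ k := by intro h; subst h; omega
  apply sum_filter_congr'
  intro j hf
  constructor
  · intro hcyc
    by_contra hq
    push_neg at hq
    apply hf
    unfold cyc3 at hcyc; rw [if_neg hik] at hcyc; simp only [Fin.le_def] at hcyc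
    apply term_zero' M hA hB; omega
  · intro hq
    unfold cyc3; rw [if_neg hik]; simp only [Fin.le_def]; omega

lemma cyc_sum_zero' {n N : ℕ} (M : Matrix (Fin N) (Fin N) ℂ)
    (hA : ∀ i j : Fin N, i.val < n → j.val < n → i.val ≤ j.val → M i j = 0)
    (hB : ∀ i j : Fin N, n ≤ i.val → n ≤ j.val → i.val ≤ j.val → M i j = 0)
    (i k : Fin N) (h : i.val ≤ k.val ∨ (n ≤ i.val ∧ k.val < n)) :
    ∑ j ∈ Finset.univ.filter (fun j => cyc3 i j k), M i j * M j k = 0 := by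
  refine Finset.sum_eq_zero fun j hj => ?_
  have hcyc := (Finset.mem_filter.mp hj).2
  by_cases hik : i = k
  · subst hik
    have hj' : j = i := by unfold cyc3 at hcyc; rwa [if_pos rfl] at hcyc
    subst hj'
    apply term_zero' M hA hB; omega
  · have hik' : i.val ≠ k.val := fun h' => hik (Fin.ext h')
    unfold cyc3 at hcyc; rw [if_neg hik] at hcyc
    simp only [Fin.le_def] at hcyc
    apply term_zero' M hA hB; omega

/-- The permutation sector is the upper-upper scheme: write `N = 2n + r`, `r ∈ {0,1}`,
`n ≥ 1`.  Suppose `M` has block form `[[A, X],[Y, B]]` where the diagonal blocks `A`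
(indices `< n`) and `B` (indices `≥ n`) are strictly lower triangular.  Then
`M • M = 0` if and only if the ordinary products `XY` and `YX` are upper triangular,
i.e. `(XY)_{ab} = 0` for `a > b` and `(YX)_{cd} = 0` for `c > d`; here
`(XY)_{ab} = ∑_{c ≥ n} M_{ac} M_{cb}` for `a, b < n` and
`(YX)_{cd} = ∑_{a < n} M_{ca} M_{ad}` for `c, d ≥ n`. -/
theorem brauer_permutation_sector (n r N : ℕ) (hr : r = 0 ∨ r = 1) (hn : 1 ≤ n)
    (hN : N = 2 * n + r)
    (M : Matrix (Fin N) (Fin N) ℂ)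
    (hA : ∀ i j : Fin N, i.val < n → j.val < n → i.val ≤ j.val → M i j = 0)
    (hB : ∀ i j : Fin N, n ≤ i.val → n ≤ j.val → i.val ≤ j.val → M i j = 0) :
    cprod M M = 0 ↔
      ((∀ a b : Fin N, a.val < n → b.val < n → b.val < a.val →
          ∑ c ∈ Finset.univ.filter (fun c : Fin N => n ≤ c.val), M a c * M c b = 0) ∧
       (∀ c d : Fin N, n ≤ c.val → n ≤ d.val → d.val < c.val →
          ∑ a ∈ Finset.univ.filter (fun a : Fin N => a.val < n), M c a * M a d = 0)) := by
  constructor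
  · intro h
    have h' : ∀ i k : Fin N,
        ∑ j ∈ Finset.univ.filter (fun j => cyc3 i j k), M i j * M j k = 0 := by
      intro i k
      have h2 := congrFun (congrFun h i) k
      simpa [cprod] using h2
    refine ⟨fun a b ha hb hba => ?_, fun c d hc hd hdc => ?_⟩
    · rw [← cyc_sum_LL' M hA hB a b ha hb hba]; exact h' a b
    · rw [← cyc_sum_HH' M hA hB c d hc hd hdc]; exact h' c d
  · rintro ⟨h1, h2⟩
    ext i k
    simp only [Matrix.zero_apply, cprod, Matrix.of_apply]
    rcases Nat.lt_or_ge i.val n with hi | hi <;> rcases Nat.lt_or_ge k.val n with hk | hk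
    · rcases Nat.lt_or_ge k.val i.val with hki | hki
      · rw [cyc_sum_LL' M hA hB i k hi hk hki]; exact h1 i k hi hk hki
      · exact cyc_sum_zero' M hA hB i k (Or.inl hki)
    · exact cyc_sum_zero' M hA hB i k (Or.inl (by omega))
    · exact cyc_sum_zero' M hA hB i k (Or.inr ⟨hi, hk⟩)
    · rcases Nat.lt_or_ge k.val i.val with hki | hki
      · rw [cyc_sum_HH' M hA hB i k hi hk hki]; exact h2 i k hi hk hki
      · exact cyc_sum_zero' M hA hB i k (Or.inl hki)
end
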